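/- arXiv:1109.2769 — 5 statements merged into one kernel-verified Lean document; each statement's English description precedes it below -/
import Mathlib

section
/- Let G be a connected finite simple graph with minimum degree at least 3. Then the rainbow connection number of the line graph L(G) satisfies rc(L(G)) ≤ 3·rad(L(G)) ≤ 3·(rad(G) + 1). -/
/-- An edge coloring `c` (with colors in `Fin k`) makes `G` rainbow connected if every
pair of vertices is joined by a path whose edges receive pairwise distinct colors. -/
def SimpleGraph.IsRainbowColoring {V : Type*} (G : SimpleGraph V) {k : ℕ}
    (c : Sym2 V → Fin k) : Prop :=
  ∀ u v : V, ∃ p : G.Walk u v, p.IsPath ∧ (p.edges.map c).Nodup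

/-- The rainbow connection number: the least `k` admitting a rainbow `k`-edge-coloring. -/
noncomputable def SimpleGraph.rainbowConnectionNumber {V : Type*} (G : SimpleGraph V) : ℕ :=
  sInf {k : ℕ | ∃ c : Sym2 V → Fin k, G.IsRainbowColoring c}

/-- A graph is bridgeless if it is connected and no edge is a bridge. -/
def SimpleGraph.Bridgeless {V : Type*} (G : SimpleGraph V) : Prop :=
  G.Connected ∧ ∀ e ∈ G.edgeSet, ¬ G.IsBridge e

/-- The eccentricity of a vertex: the largest distance to another vertex. -/
noncomputable def SimpleGraph.eccentNat {V : Type*} [Fintype V] (G : SimpleGraph V) (x : V) : ℕ :=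
  Finset.univ.sup fun y => G.dist x y

/-- The radius of a graph: the least eccentricity of a vertex. -/
noncomputable def SimpleGraph.radiusNat {V : Type*} [Fintype V] (G : SimpleGraph V) : ℕ :=
  sInf (Set.range G.eccentNat)

open SimpleGraph


private def rbit (b : Bool) : ℕ := if b then 0 else 1

private lemma rbit_le_one (b : Bool) : rbit b ≤ 1 := by cases b <;> simp [rbit]

private lemma rbit_inj {a b : Bool} (h : rbit a = rbit b) : a = b := by
  cases a <;> cases b <;> simp_all [rbit]

private lemma rbit_not (b : Bool) : rbit (!b) ≠ rbit b := by cases b <;> simp [rbit]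

private lemma nodup_map_append {α β : Type*} (c : α → β) {l₁ l₂ : List α}
    (h₁ : (l₁.map c).Nodup) (h₂ : (l₂.map c).Nodup)
    (h : ∀ x ∈ l₁, ∀ y ∈ l₂, c x ≠ c y) :
    ((l₁ ++ l₂).map c).Nodup := by
  rw [List.map_append, List.nodup_append]
  refine ⟨h₁, h₂, fun a ha b hb hab => ?_⟩
  obtain ⟨x, hx, rfl⟩ := List.mem_map.mp ha
  obtain ⟨y, hy, hxy⟩ := List.mem_map.mp hb
  exact h x hx y hy (hab.trans hxy.symm)

/-- Max-cut argument: a 2-coloring where every nonisolated vertex has an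
oppositely colored neighbor. -/
private lemma exists_cut {W : Type*} [Fintype W] (Γ : SimpleGraph W) :
    ∃ φ : W → Bool, ∀ v, (∃ w, Γ.Adj v w) → ∃ w, Γ.Adj v w ∧ φ w ≠ φ v := by
  classical
  let F : (W → Bool) → ℕ := fun φ =>
    ∑ p : W × W, if Γ.Adj p.1 p.2 ∧ φ p.1 ≠ φ p.2 then 1 else 0
  obtain ⟨φ, -, hφ⟩ := Finset.exists_max_image (Finset.univ : Finset (W → Bool)) F
    ⟨fun _ => true, Finset.mem_univ _⟩
  refine ⟨φ, fun v hv => ?_⟩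
  by_contra hbad
  push_neg at hbad
  obtain ⟨w₀, hw₀⟩ := hv
  have hall : ∀ w, Γ.Adj v w → φ w = φ v := hbad
  set φ' := Function.update φ v (!(φ v)) with hφ'def
  have hne : ∀ w, w ≠ v → φ' w = φ w := fun w hw => Function.update_of_ne hw _ _
  have hvv : φ' v = !(φ v) := Function.update_self _ _ _
  have hlt : F φ < F φ' := by
    apply Finset.sum_lt_sum
    · rintro ⟨a, b⟩ -
      by_cases h1 : Γ.Adj a b
      · by_cases h2 : a = v
        · subst h2
          by_cases h3 : b = a
          · subst h3; exact absurd h1 (Γ.loopless.irrefl _)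
          · have heq : φ b = φ a := hall _ h1
            simp [h1, hvv, hne _ h3, heq]
        · by_cases h3 : b = v
          · subst h3
            have heq : φ a = φ b := hall _ (Γ.adj_symm h1)
            simp [h1, hvv, hne _ h2, heq]
          · simp [hne _ h2, hne _ h3]
      · simp [h1]
    · refine ⟨(v, w₀), Finset.mem_univ _, ?_⟩
      have h3 : w₀ ≠ v := fun h => Γ.loopless.irrefl v (h ▸ hw₀)
      have heq : φ w₀ = φ v := hall _ hw₀
      simp [hw₀, hvv, hne _ h3, heq]
  exact absurd (hφ φ' (Finset.mem_univ _)) (by omega)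

private theorem exists_good_coloring {W : Type*} [Fintype W] (H : SimpleGraph W)
    (hconn : H.Connected)
    (htri : ∀ a b : W, H.Adj a b → ∃ w, H.Adj a w ∧ H.Adj b w)
    (z : W) (r : ℕ) (hr : ∀ v, H.dist z v ≤ r) :
    ∃ c : Sym2 W → ℕ, (∀ e ∈ H.edgeSet, c e < 3 * r) ∧
      ∀ u v : W, ∃ p : H.Walk u v, p.IsPath ∧ (p.edges.map c).Nodup := by
  classical
  have hzero : ∀ v : W, H.dist z v = 0 → v = z := fun v h =>
    ((hconn.dist_eq_zero_iff).mp h).symm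
  have hadj_le : ∀ a b : W, H.Adj a b → H.dist z b ≤ H.dist z a + 1 := by
    intro a b h
    have h1 : H.dist z b ≤ H.dist z a + H.dist a b := hconn.dist_triangle
    have h2 : H.dist a b ≤ 1 := by
      simpa using H.dist_le (Walk.cons h Walk.nil)
    omega
  have hdown : ∀ v : W, 0 < H.dist z v →
      ∃ d, H.Adj v d ∧ H.dist z d + 1 = H.dist z v := by
    intro v hv
    obtain ⟨p, hp⟩ := hconn.exists_walk_length_eq_dist z v
    obtain ⟨q, hq⟩ : ∃ q : H.Walk v z, q.length = H.dist z v :=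
      ⟨p.reverse, by rw [Walk.length_reverse, hp]⟩
    cases q with
    | nil =>
      rw [← hq] at hv; simp at hv
    | @cons _ d _ h q' =>
      refine ⟨d, h, ?_⟩
      have h1 : H.dist z d ≤ q'.length := by
        rw [H.dist_comm]; exact H.dist_le q'
      have h2 : H.dist z v ≤ H.dist z d + 1 := hadj_le d v h.symm
      have h3 : q'.length + 1 = H.dist z v := by simpa using hq
      omega
  have hdown' : ∀ v : W, ∃ d, 0 < H.dist z v →
      H.Adj v d ∧ H.dist z d + 1 = H.dist z v := by
    intro v
    by_cases h : 0 < H.dist z v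
    · obtain ⟨d, hd⟩ := hdown v h; exact ⟨d, fun _ => hd⟩
    · exact ⟨z, fun h' => absurd h' h⟩
  choose D hD using hdown'
  obtain ⟨φ, hφ⟩ := exists_cut
    { Adj := fun a b => H.Adj a b ∧ H.dist z a = H.dist z b,
      symm := ⟨fun a b h => ⟨h.1.symm, h.2.symm⟩⟩,
      loopless := ⟨fun a h => H.loopless.irrefl a h.1⟩ }
  obtain ⟨c, hch, hcd⟩ : ∃ c : Sym2 W → ℕ,
      (∀ a b : W, H.dist z a = H.dist z b → c s(a, b) = 3 * H.dist z a - 1) ∧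
      (∀ a b : W, H.dist z b < H.dist z a →
        c s(a, b) = 3 * (H.dist z a - 1) + rbit (if b = D a then φ a else !(φ a))) := by
    refine ⟨Sym2.lift ⟨fun a b =>
      if H.dist z a = H.dist z b then 3 * H.dist z a - 1
      else if H.dist z b < H.dist z a then
        3 * (H.dist z a - 1) + rbit (if b = D a then φ a else !(φ a))
      else 3 * (H.dist z b - 1) + rbit (if a = D b then φ b else !(φ b)), ?_⟩, ?_, ?_⟩
    · intro a b
      dsimp only
      split_ifs <;> omega
    · intro a b h
      rw [Sym2.lift_mk]
      dsimp only
      rw [if_pos h]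
    · intro a b h
      rw [Sym2.lift_mk]
      dsimp only
      rw [if_neg (by omega), if_pos h]
  have hedge_lt : ∀ (i : ℕ) (a b : W), H.Adj a b → H.dist z a ≤ i → H.dist z b ≤ i →
      c s(a, b) < 3 * i := by
    intro i a b hab ha hb
    rcases lt_trichotomy (H.dist z a) (H.dist z b) with h | h | h
    · rw [Sym2.eq_swap, hcd b a h]
      have := rbit_le_one (if a = D b then φ b else !(φ b))
      omega
    · rw [hch a b h]
      rcases Nat.eq_zero_or_pos (H.dist z a) with h0 | h0
      · exact absurd ((hzero a h0).trans (hzero b (h ▸ h0)).symm) hab.ne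
      · omega
    · rw [hcd a b h]
      have := rbit_le_one (if b = D a then φ a else !(φ a))
      omega
  have hcolwalk : ∀ (i : ℕ) (u v : W) (p : H.Walk u v),
      (∀ x ∈ p.support, H.dist z x ≤ i) → ∀ e ∈ p.edges, c e < 3 * i := by
    intro i u v p hs e
    refine Sym2.ind (fun a b he => ?_) e
    exact hedge_lt i a b (p.adj_of_mem_edges he)
      (hs a (p.fst_mem_support_of_mem_edges he)) (hs b (p.snd_mem_support_of_mem_edges he))
  have hDspec : ∀ (i : ℕ) (w : W), H.dist z w = i + 1 →
      H.Adj w (D w) ∧ H.dist z (D w) = i ∧ c s(w, D w) = 3 * i + rbit (φ w) := by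
    intro i w hw
    obtain ⟨h1, h2⟩ := hD w (by omega)
    refine ⟨h1, by omega, ?_⟩
    rw [hcd w (D w) (by omega), if_pos rfl, hw]
    omega
  have hD2 : ∀ (i : ℕ) (w d : W), H.dist z w = i + 1 → H.dist z d = i → d ≠ D w →
      c s(w, d) = 3 * i + rbit (!(φ w)) := by
    intro i w d hw hd hne
    rw [hcd w d (by omega), if_neg hne, hw]
    omega
  have hhor : ∀ (i : ℕ) (a b : W), H.dist z a = i + 1 → H.dist z b = i + 1 →
      c s(a, b) = 3 * i + 2 := by
    intro i a b ha hb
    rw [hch a b (ha.trans hb.symm), ha]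
    omega
  have key : ∀ (i : ℕ) (u v : W), H.dist z u ≤ i → H.dist z v ≤ i →
      ∃ p : H.Walk u v, (∀ x ∈ p.support, H.dist z x ≤ i) ∧ (p.edges.map c).Nodup := by
    intro i
    induction i with
    | zero =>
      intro u v hu hv
      have h1 : u = z := hzero u (by omega)
      have h2 : v = z := hzero v (by omega)
      subst h1; subst h2
      exact ⟨Walk.nil, by simp, by simp⟩
    | succ i ih =>
      have hB : ∀ u v : W, H.dist z u = i + 1 → H.dist z v ≤ i →
          ∃ p : H.Walk u v, (∀ x ∈ p.support, H.dist z x ≤ i + 1) ∧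
            (p.edges.map c).Nodup := by
        intro u v hu hv
        obtain ⟨hadj, hdd, hcc⟩ := hDspec i u hu
        obtain ⟨q, hq1, hq2⟩ := ih (D u) v (by omega) hv
        refine ⟨Walk.cons hadj q, ?_, ?_⟩
        · intro x hx
          rw [Walk.support_cons, List.mem_cons] at hx
          rcases hx with rfl | hx
          · omega
          · exact le_trans (hq1 x hx) (by omega)
        · rw [Walk.edges_cons, List.map_cons, List.nodup_cons]
          refine ⟨?_, hq2⟩
          intro hmem
          obtain ⟨e, he, heq⟩ := List.mem_map.mp hmem
          have hlt := hcolwalk i _ _ q hq1 e he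
          rw [hcc] at heq
          omega
      intro u v hu hv
      by_cases hu' : H.dist z u ≤ i
      · by_cases hv' : H.dist z v ≤ i
        · obtain ⟨p, h1, h2⟩ := ih u v hu' hv'
          exact ⟨p, fun x hx => le_trans (h1 x hx) (by omega), h2⟩
        · obtain ⟨p, h1, h2⟩ := hB v u (by omega) hu'
          refine ⟨p.reverse, ?_, ?_⟩
          · intro x hx
            rw [Walk.support_reverse, List.mem_reverse] at hx
            exact h1 x hx
          · rw [Walk.edges_reverse, List.map_reverse, List.nodup_reverse]
            exact h2
      · have hu'' : H.dist z u = i + 1 := by omega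
        by_cases hv' : H.dist z v ≤ i
        · exact hB u v hu'' hv'
        · have hv'' : H.dist z v = i + 1 := by omega
          by_cases huv : u = v
          · subst huv
            exact ⟨Walk.nil, by simp; omega, by simp⟩
          obtain ⟨hadju, hddu, hccu⟩ := hDspec i u hu''
          have tail : ∃ (d₂ : W) (tl : H.Walk d₂ v), H.dist z d₂ = i ∧
              (∀ x ∈ tl.support, H.dist z x ≤ i + 1) ∧ (tl.edges.map c).Nodup ∧
              (∀ e ∈ tl.edges, 3 * i ≤ c e ∧ c e ≠ c s(u, D u)) := by
            by_cases hφv : φ v = φ u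
            · by_cases hd2 : ∃ d, H.Adj v d ∧ H.dist z d = i ∧ d ≠ D v
              · obtain ⟨d, hd1, hd2', hd3⟩ := hd2
                have hcvd : c s(d, v) = 3 * i + rbit (!(φ v)) := by
                  rw [Sym2.eq_swap]; exact hD2 i v d hv'' hd2' hd3
                refine ⟨d, Walk.cons hd1.symm Walk.nil, hd2', ?_, by simp, ?_⟩
                · intro x hx
                  simp only [Walk.support_cons, Walk.support_nil, List.mem_cons,
                    List.mem_singleton] at hx
                  rcases hx with rfl | rfl | h
                  · omega
                  · omega
                  · simp at h
                · intro e he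
                  simp only [Walk.edges_cons, Walk.edges_nil, List.mem_singleton] at he
                  subst he
                  rw [hcvd, hccu, hφv]
                  have h1 := rbit_le_one (φ u)
                  have h2 := rbit_le_one (!(φ u))
                  have h3 := rbit_not (φ u)
                  omega
              · push_neg at hd2
                obtain ⟨hadjv, hddv⟩ := hD v (by omega)
                obtain ⟨w₁, hw₁v, hw₁d⟩ := htri v (D v) hadjv
                have hdDv : H.dist z (D v) = i := by omega
                have h1 : H.dist z w₁ ≤ i + 1 := by
                  have := hadj_le (D v) w₁ hw₁d; omega
                have h2 : H.dist z v ≤ H.dist z w₁ + 1 := hadj_le w₁ v hw₁v.symm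
                have h3 : H.dist z w₁ = i + 1 := by
                  by_cases hcase : H.dist z w₁ = i + 1
                  · exact hcase
                  · have hwi : H.dist z w₁ = i := by omega
                    have := hd2 w₁ hw₁v hwi
                    rw [this] at hw₁d
                    exact absurd hw₁d (H.loopless.irrefl _)
                obtain ⟨w, ⟨hwv, hwd⟩, hφw⟩ := hφ v ⟨w₁, ⟨hw₁v, by rw [hv'', h3]⟩⟩
                have hw'' : H.dist z w = i + 1 := by rw [← hwd, hv'']
                obtain ⟨hadjw, hddw, hccw⟩ := hDspec i w hw''
                have e1 : c s(D w, w) = 3 * i + rbit (φ w) := by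
                  rw [Sym2.eq_swap]; exact hccw
                have e2 : c s(w, v) = 3 * i + 2 := hhor i w v hw'' hv''
                have hφwu : φ w ≠ φ u := fun h => hφw (h.trans hφv.symm)
                have hrne : rbit (φ w) ≠ rbit (φ u) := fun h => hφwu (rbit_inj h)
                refine ⟨D w, Walk.cons hadjw.symm (Walk.cons hwv.symm Walk.nil), hddw,
                  ?_, ?_, ?_⟩
                · intro x hx
                  simp only [Walk.support_cons, Walk.support_nil, List.mem_cons,
                    List.mem_singleton] at hx
                  rcases hx with rfl | rfl | rfl | h
                  · omega
                  · omega
                  · omega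
                  · simp at h
                · simp only [Walk.edges_cons, Walk.edges_nil, List.map_cons, List.map_nil,
                    List.nodup_cons, List.mem_singleton, List.mem_cons]
                  rw [e1, e2]
                  have := rbit_le_one (φ w)
                  refine ⟨?_, by simp⟩
                  simp only [List.mem_singleton, List.not_mem_nil, or_false]
                  omega
                · intro e he
                  simp only [Walk.edges_cons, Walk.edges_nil, List.mem_cons,
                    List.mem_singleton] at he
                  have hb1 := rbit_le_one (φ w)
                  have hb2 := rbit_le_one (φ u)
                  rcases he with rfl | rfl | h
                  · rw [e1, hccu]; omega
                  · rw [e2, hccu]; omega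
                  · simp at h
            · obtain ⟨hadjv, hddv⟩ := hD v (by omega)
              have hdv : H.dist z (D v) = i := by omega
              have hcv : c s(v, D v) = 3 * i + rbit (φ v) := (hDspec i v hv'').2.2
              have hrne : rbit (φ v) ≠ rbit (φ u) := fun h => hφv (rbit_inj h)
              refine ⟨D v, Walk.cons hadjv.symm Walk.nil, hdv, ?_, by simp, ?_⟩
              · intro x hx
                simp only [Walk.support_cons, Walk.support_nil, List.mem_cons,
                  List.mem_singleton] at hx
                rcases hx with rfl | rfl | h
                · omega
                · omega
                · simp at h
              · intro e he
                simp only [Walk.edges_cons, Walk.edges_nil, List.mem_singleton] at he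
                subst he
                rw [Sym2.eq_swap, hcv, hccu]
                omega
          obtain ⟨d₂, tl, hd₂, htl1, htl2, htl3⟩ := tail
          obtain ⟨q, hq1, hq2⟩ := ih (D u) d₂ (by omega) (by omega)
          refine ⟨Walk.cons hadju (q.append tl), ?_, ?_⟩
          · intro x hx
            rw [Walk.support_cons, List.mem_cons] at hx
            rcases hx with rfl | hx
            · omega
            · rw [Walk.mem_support_append_iff] at hx
              rcases hx with hx | hx
              · exact le_trans (hq1 x hx) (by omega)
              · exact htl1 x hx
          · rw [Walk.edges_cons, Walk.edges_append, List.map_cons, List.nodup_cons]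
            constructor
            · intro hmem
              obtain ⟨e, he, heq⟩ := List.mem_map.mp hmem
              rw [List.mem_append] at he
              rcases he with he | he
              · have hlt := hcolwalk i _ _ q hq1 e he
                rw [hccu] at heq
                omega
              · exact (htl3 e he).2 heq
            · refine nodup_map_append c hq2 htl2 ?_
              intro x hx y hy
              have h1 := hcolwalk i _ _ q hq1 x hx
              have h2 := (htl3 y hy).1
              omega
  refine ⟨c, ?_, ?_⟩
  · intro e
    refine Sym2.ind (fun a b he => ?_) e
    exact hedge_lt r a b (H.mem_edgeSet.mp he) (hr a) (hr b)
  · intro u v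
    obtain ⟨p, hp1, hp2⟩ := key r u v (hr u) (hr v)
    refine ⟨p.bypass, p.bypass_isPath, ?_⟩
    have hsub := p.edges_bypass_subset
    exact List.Nodup.map_on (fun x hx y hy hxy =>
      List.inj_on_of_nodup_map hp2 (hsub hx) (hsub hy) hxy)
      p.bypass_isPath.isTrail.edges_nodup


/-- For a connected graph `G` with minimum degree at least `3`, the
line graph `L(G)` satisfies `rc(L(G)) ≤ 3 · rad(L(G)) ≤ 3 · (rad(G) + 1)`. -/
theorem rc_lineGraph_le {V : Type*} [Fintype V] [DecidableEq V] (G : SimpleGraph V)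
    [DecidableRel G.Adj] (hc : G.Connected) (hδ : ∀ v : V, 3 ≤ G.degree v) :
    G.lineGraph.rainbowConnectionNumber ≤ 3 * G.lineGraph.radiusNat ∧
      3 * G.lineGraph.radiusNat ≤ 3 * (G.radiusNat + 1) := by
  classical
  set L := G.lineGraph with hL
  -- walks in the line graph from walks in G
  have walkL : ∀ {u x : V} (p : G.Walk u x) (e f : G.edgeSet),
      u ∈ (e : Sym2 V) → x ∈ (f : Sym2 V) → ∃ q : L.Walk e f, q.length ≤ p.length + 1 := by
    intro u x p
    induction p with
    | nil =>
      intro e f hu hx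
      by_cases hef : e = f
      · subst hef; exact ⟨Walk.nil, by simp⟩
      · refine ⟨Walk.cons (lineGraph_adj_iff_exists.mpr ⟨hef, _, hu, hx⟩) Walk.nil, by simp⟩
    | @cons a b x h p' ih =>
      intro e f hu hx
      have hg : s(a, b) ∈ G.edgeSet := h
      have hyg : b ∈ ((⟨s(a, b), hg⟩ : G.edgeSet) : Sym2 V) := Sym2.mem_mk_right a b
      obtain ⟨q', hq'⟩ := ih ⟨s(a, b), hg⟩ f hyg hx
      by_cases heg : e = ⟨s(a, b), hg⟩
      · subst heg
        exact ⟨q', by simp [Walk.length_cons]; omega⟩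
      · refine ⟨Walk.cons (lineGraph_adj_iff_exists.mpr ⟨heg, a, hu, Sym2.mem_mk_left a b⟩) q',
          by simp [Walk.length_cons]; omega⟩
  -- L is connected
  have hVne : Nonempty V := hc.nonempty
  obtain ⟨v₀⟩ := hVne
  haveI : Nonempty V := ⟨v₀⟩
  obtain ⟨w₀, hw₀⟩ := (G.degree_pos_iff_exists_adj v₀).mp (by have := hδ v₀; omega)
  have hEne : Nonempty G.edgeSet := ⟨⟨s(v₀, w₀), hw₀⟩⟩
  have hLconn : L.Connected := by
    haveI := hEne
    constructor
    intro e f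
    obtain ⟨e1, he1⟩ := e
    obtain ⟨f1, hf1⟩ := f
    revert he1
    refine Sym2.ind (fun a b => ?_) e1
    intro he1
    revert hf1
    refine Sym2.ind (fun x y => ?_) f1
    intro hf1
    obtain ⟨p⟩ := hc.preconnected a x
    obtain ⟨q, -⟩ := walkL p ⟨s(a, b), he1⟩ ⟨s(x, y), hf1⟩
      (Sym2.mem_mk_left a b) (Sym2.mem_mk_left x y)
    exact ⟨q⟩
  -- every edge of L is on a triangle
  have htriL : ∀ e₁ e₂ : G.edgeSet, L.Adj e₁ e₂ → ∃ e₃, L.Adj e₁ e₃ ∧ L.Adj e₂ e₃ := by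
    intro e₁ e₂ hadj
    obtain ⟨hne, v, hv1, hv2⟩ := hadj
    have hm1 : (e₁ : Sym2 V) ∈ G.incidenceFinset v := by
      rw [SimpleGraph.mem_incidenceFinset]; exact ⟨e₁.2, hv1⟩
    have hm2 : (e₂ : Sym2 V) ∈ G.incidenceFinset v := by
      rw [SimpleGraph.mem_incidenceFinset]; exact ⟨e₂.2, hv2⟩
    have hsub : ¬ (G.incidenceFinset v ⊆ {(e₁ : Sym2 V), (e₂ : Sym2 V)}) := by
      intro hsub
      have h1 := Finset.card_le_card hsub
      have h2 : ({(e₁ : Sym2 V), (e₂ : Sym2 V)} : Finset (Sym2 V)).card ≤ 2 :=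
        Finset.card_insert_le _ _ |>.trans (by simp)
      rw [G.card_incidenceFinset_eq_degree] at h1
      have := hδ v
      omega
    obtain ⟨e₃, he₃, he₃'⟩ := Finset.not_subset.mp hsub
    rw [SimpleGraph.mem_incidenceFinset] at he₃
    obtain ⟨he₃e, hve₃⟩ := he₃
    simp only [Finset.mem_insert, Finset.mem_singleton] at he₃'
    push_neg at he₃'
    refine ⟨⟨e₃, he₃e⟩, ⟨?_, ⟨v, hv1, hve₃⟩⟩, ⟨?_, ⟨v, hv2, hve₃⟩⟩⟩
    · exact fun hh => he₃'.1 (congrArg Subtype.val hh).symm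
    · exact fun hh => he₃'.2 (congrArg Subtype.val hh).symm
  -- radius attained
  have hrange : (Set.range L.eccentNat).Nonempty := Set.range_nonempty _
  obtain ⟨estar, hestar⟩ := Nat.sInf_mem hrange
  have hrL : ∀ f, L.dist estar f ≤ L.radiusNat := by
    intro f
    rw [SimpleGraph.radiusNat, ← hestar]
    exact Finset.le_sup (Finset.mem_univ f)
  -- radius of L is at least 1
  have hrpos : 1 ≤ L.radiusNat := by
    by_contra h
    have h0 : L.radiusNat = 0 := by omega
    obtain ⟨a, ha, b, hb, hab⟩ := Finset.one_lt_card.mp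
      (show 1 < (G.neighborFinset v₀).card by
        rw [G.card_neighborFinset_eq_degree]; have := hδ v₀; omega)
    rw [mem_neighborFinset] at ha hb
    have hE1 : L.dist estar ⟨s(v₀, a), ha⟩ = 0 := by have := hrL ⟨s(v₀, a), ha⟩; omega
    have hE2 : L.dist estar ⟨s(v₀, b), hb⟩ = 0 := by have := hrL ⟨s(v₀, b), hb⟩; omega
    have h1 := (hLconn.dist_eq_zero_iff).mp hE1
    have h2 := (hLconn.dist_eq_zero_iff).mp hE2
    have h3 := congrArg Subtype.val (h1.symm.trans h2)
    exact hab (Sym2.congr_right.mp h3)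
  constructor
  · -- rainbow connection bound
    obtain ⟨c, hclt, hcrb⟩ := exists_good_coloring L hLconn htriL estar L.radiusNat hrL
    have hk : 0 < 3 * L.radiusNat := by omega
    refine Nat.sInf_le ⟨fun e => ⟨c e % (3 * L.radiusNat), Nat.mod_lt _ hk⟩, ?_⟩
    intro u v
    obtain ⟨p, hp1, hp2⟩ := hcrb u v
    refine ⟨p, hp1, ?_⟩
    refine List.Nodup.map_on ?_ (List.Nodup.of_map c hp2)
    intro x hx y hy hxy
    have hbx : c x < 3 * L.radiusNat := hclt x (p.edges_subset_edgeSet hx)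
    have hby : c y < 3 * L.radiusNat := hclt y (p.edges_subset_edgeSet hy)
    have : c x % (3 * L.radiusNat) = c y % (3 * L.radiusNat) := congrArg Fin.val hxy
    rw [Nat.mod_eq_of_lt hbx, Nat.mod_eq_of_lt hby] at this
    exact List.inj_on_of_nodup_map hp2 hx hy this
  · -- radius comparison
    have : L.radiusNat ≤ G.radiusNat + 1 := by
      obtain ⟨ustar, hustar⟩ := Nat.sInf_mem (Set.range_nonempty G.eccentNat)
      obtain ⟨v₁, hv₁⟩ := (G.degree_pos_iff_exists_adj ustar).mp (by have := hδ ustar; omega)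
      have hecc : L.eccentNat ⟨s(ustar, v₁), hv₁⟩ ≤ G.radiusNat + 1 := by
        apply Finset.sup_le
        intro f _
        obtain ⟨f1, hf1⟩ := f
        revert hf1
        refine Sym2.ind (fun x y hf1 => ?_) f1
        obtain ⟨p, hp⟩ := hc.exists_walk_length_eq_dist ustar x
        obtain ⟨q, hq⟩ := walkL p ⟨s(ustar, v₁), hv₁⟩ ⟨s(x, y), hf1⟩
          (Sym2.mem_mk_left _ _) (Sym2.mem_mk_left _ _)
        have h1 : L.dist _ _ ≤ q.length := L.dist_le q
        have h2 : G.dist ustar x ≤ G.eccentNat ustar := Finset.le_sup (Finset.mem_univ x)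
        rw [hp] at hq
        rw [SimpleGraph.radiusNat, ← hustar]
        omega
      exact le_trans (Nat.sInf_le ⟨_, rfl⟩) hecc
    omega
end

section
/- Let G be a finite simple graph containing a vertex x adjacent to every other vertex of G, and suppose the subgraph of G induced by N(x) has no isolated vertex. Then the rainbow connection number of G satisfies rc(G) ≤ 3. -/
/-- Max-cut: a bipartition of `V \ {x}` in which every vertex has a neighbor across. -/
lemma exists_good_bipartition {V : Type*} [Fintype V] [DecidableEq V]
    (G : SimpleGraph V) [DecidableRel G.Adj] (x : V)
    (hiso : ∀ y : V, y ≠ x → ∃ z, z ≠ x ∧ G.Adj y z) :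
    ∃ s : Finset V, ∀ y : V, y ≠ x → ∃ z, z ≠ x ∧ G.Adj y z ∧ (y ∈ s ↔ z ∉ s) := by
  classical
  set cut : Finset V → ℕ := fun t =>
    (Finset.univ.filter (fun p : V × V =>
      G.Adj p.1 p.2 ∧ p.1 ≠ x ∧ p.2 ≠ x ∧ (p.1 ∈ t ↔ p.2 ∉ t))).card with hcut
  obtain ⟨s, hs⟩ := Finite.exists_max cut
  refine ⟨s, fun y hy => ?_⟩
  by_contra hcon
  push_neg at hcon
  -- every neighbor z≠x of y is on the same side as y
  have hsame : ∀ z, z ≠ x → G.Adj y z → (y ∈ s ↔ z ∈ s) := by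
    intro z hzx hadj
    have := hcon z hzx hadj
    tauto
  obtain ⟨z, hzx, hadj⟩ := hiso y hy
  -- flip y
  set s' : Finset V := if y ∈ s then s.erase y else insert y s with hs'
  have hmem : ∀ w, w ≠ y → (w ∈ s' ↔ w ∈ s) := by
    intro w hw
    by_cases h : y ∈ s <;> simp [hs', h, hw]
  have hymem : (y ∈ s') ↔ (y ∉ s) := by
    by_cases h : y ∈ s <;> simp [hs', h]
  have hsub : (Finset.univ.filter (fun p : V × V =>
      G.Adj p.1 p.2 ∧ p.1 ≠ x ∧ p.2 ≠ x ∧ (p.1 ∈ s ↔ p.2 ∉ s))) ⊂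
      (Finset.univ.filter (fun p : V × V =>
      G.Adj p.1 p.2 ∧ p.1 ≠ x ∧ p.2 ≠ x ∧ (p.1 ∈ s' ↔ p.2 ∉ s'))) := by
    constructor
    · intro p hp
      simp only [Finset.mem_filter, Finset.mem_univ, true_and] at hp ⊢
      obtain ⟨h1, h2, h3, h4⟩ := hp
      have hp1 : p.1 ≠ y := by
        rintro rfl
        have := hsame p.2 h3 h1
        tauto
      have hp2 : p.2 ≠ y := by
        rintro rfl
        have := hsame p.1 h2 h1.symm
        tauto
      rw [hmem p.1 hp1, hmem p.2 hp2]
      exact ⟨h1, h2, h3, h4⟩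
    · intro hsup
      have hzy : z ≠ y := fun h => G.irrefl (h ▸ hadj)
      have hyz : (y, z) ∈ (Finset.univ.filter (fun p : V × V =>
          G.Adj p.1 p.2 ∧ p.1 ≠ x ∧ p.2 ≠ x ∧ (p.1 ∈ s' ↔ p.2 ∉ s'))) := by
        simp only [Finset.mem_filter, Finset.mem_univ, true_and]
        refine ⟨hadj, hy, hzx, ?_⟩
        rw [hymem, hmem z hzy, ← hsame z hzx hadj]
      have := hsup hyz
      simp only [Finset.mem_filter, Finset.mem_univ, true_and] at this
      have := hsame z hzx hadj
      tauto
  have : cut s < cut s' := Finset.card_lt_card hsub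
  have := hs s'
  omega



/-- If some vertex `x` is adjacent to every other vertex of `G` and
the subgraph induced by `N(x)` has no isolated vertex, then `rc(G) ≤ 3`. -/
theorem rc_le_three_of_dominating_vertex {V : Type*} [Fintype V] (G : SimpleGraph V)
    (x : V) (hx : ∀ y : V, y ≠ x → G.Adj x y)
    (hiso : ∀ y : V, G.Adj x y → ∃ z : V, G.Adj x z ∧ G.Adj y z) :
    G.rainbowConnectionNumber ≤ 3 := by
  classical
  have hiso' : ∀ y : V, y ≠ x → ∃ z, z ≠ x ∧ G.Adj y z := by
    intro y hy
    obtain ⟨z, hxz, hyz⟩ := hiso y (hx y hy)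
    exact ⟨z, fun h => G.irrefl (h ▸ hxz).symm, hyz⟩
  obtain ⟨s, hs⟩ := exists_good_bipartition G x hiso'
  set f : V → Fin 3 := fun v => if v ∈ s then 0 else 1 with hf
  have hF : ∀ u v : V, (if u = x then f v else if v = x then f u else 2)
      = (if v = x then f u else if u = x then f v else 2) := by
    intro u v
    by_cases hu : u = x <;> by_cases hv : v = x <;> simp [hu, hv]
  set c : Sym2 V → Fin 3 := Sym2.lift ⟨fun u v => if u = x then f v else if v = x then f u else 2, hF⟩ with hc
  apply Nat.sInf_le
  refine ⟨c, fun u v => ?_⟩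
  by_cases huv : u = v
  · subst huv; exact ⟨SimpleGraph.Walk.nil, SimpleGraph.Walk.IsPath.nil, by simp⟩
  by_cases hu : u = x
  · subst hu
    refine ⟨SimpleGraph.Walk.cons (hx v (Ne.symm huv)) SimpleGraph.Walk.nil, ?_, by simp⟩
    simp [SimpleGraph.Walk.isPath_def, Ne.symm huv, huv]
  by_cases hv : v = x
  · subst hv
    refine ⟨SimpleGraph.Walk.cons (hx u huv).symm SimpleGraph.Walk.nil, ?_, by simp⟩
    simp [SimpleGraph.Walk.isPath_def, huv]
  -- u, v ≠ x
  by_cases hside : (u ∈ s) ↔ (v ∈ s)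
  · -- same side: use a neighbor z of v on the other side
    obtain ⟨z, hzx, hadj, hcross⟩ := hs v hv
    have hzu : z ≠ u := by
      intro h; subst h
      by_cases h1 : v ∈ s <;> simp_all
    have hzv : z ≠ v := fun h => G.irrefl (h ▸ hadj)
    refine ⟨SimpleGraph.Walk.cons (hx u hu).symm
      (SimpleGraph.Walk.cons (hx z hzx) (SimpleGraph.Walk.cons hadj.symm SimpleGraph.Walk.nil)), ?_, ?_⟩
    · simp [SimpleGraph.Walk.isPath_def, hu, hv, hzx, huv, hzu, hzv,
        Ne.symm hu, Ne.symm hv, Ne.symm hzx, Ne.symm huv, Ne.symm hzu, Ne.symm hzv]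
    · simp only [SimpleGraph.Walk.edges_cons, SimpleGraph.Walk.edges_nil, List.map_cons, List.map_nil, hc, Sym2.lift_mk]
      simp only [hu, hv, hzx, if_false, if_true, eq_self_iff_true, if_neg]
      have hop : u ∈ s ↔ z ∉ s := by tauto
      by_cases h1 : u ∈ s
      · have h2 : z ∉ s := hop.mp h1
        simp only [hf]; simp [h1, h2]
      · have h2 : z ∈ s := by tauto
        simp only [hf]; simp [h1, h2]
  · -- opposite sides: direct path u - x - v
    refine ⟨SimpleGraph.Walk.cons (hx u hu).symm
      (SimpleGraph.Walk.cons (hx v hv) SimpleGraph.Walk.nil), ?_, ?_⟩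
    · simp [SimpleGraph.Walk.isPath_def, hu, hv, huv, Ne.symm hu, Ne.symm hv, Ne.symm huv]
    · simp only [SimpleGraph.Walk.edges_cons, SimpleGraph.Walk.edges_nil, List.map_cons, List.map_nil, hc, Sym2.lift_mk]
      simp only [hu, hv, if_false, if_true, eq_self_iff_true, if_neg]
      by_cases h1 : u ∈ s
      · have h2 : v ∉ s := by tauto
        simp only [hf]; simp [h1, h2]
      · have h2 : v ∈ s := by tauto
        simp only [hf]; simp [h1, h2]
end

section
/- For every positive integer r there exists a bridgeless finite simple graph G in which every edge is contained in a triangle, with radius rad(G) = r, and whose rainbow connection number satisfies 3r − 1 ≤ rc(G) ≤ 3r. (Explicitly: for 1 ≤ i ≤ (3r−1)^r + 1, take a path u^i_0, u^i_1, …, u^i_r, add vertices v^i_j adjacent to u^i_{j−1} and u^i_j for j = 1, …, r, and identify all the vertices u^i_0 into a single vertex u_0; the resulting graph G has radius r, center u_0, and 3r − 1 ≤ rc(G) ≤ 3r.) -/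
/-- The eccentricity of a vertex: the largest distance to another vertex. -/
noncomputable def SimpleGraph.finEccent {V : Type*} [Fintype V] (G : SimpleGraph V) (x : V) : ℕ :=
  Finset.univ.sup fun y => G.dist x y

/-- The radius of a graph: the least eccentricity of a vertex. -/
noncomputable def SimpleGraph.finRadius {V : Type*} [Fintype V] (G : SimpleGraph V) : ℕ :=
  sInf (Set.range G.finEccent)

namespace RCProof

variable (r N : ℕ)

/-- Vertex type: `none` is the hub `u₀`; `some (i, s)` is the vertex of branch `i`
at height `s+1` (heights 1..2r; height `2j` is `uⱼ`, height `2j-1` is `vⱼ`). -/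
abbrev W := Option (Fin N × Fin (2 * r))

variable {r N}

/-- Height of a vertex. -/
def ht : W r N → ℕ
  | none => 0
  | some (_, s) => (s : ℕ) + 1

/-- The vertex of branch `i` at height `h` (hub for `h = 0`). -/
def wv (i : Fin N) (h : ℕ) : W r N :=
  if hh : h - 1 < 2 * r ∧ h ≠ 0 then some (i, ⟨h - 1, hh.1⟩) else none

lemma wv_zero (i : Fin N) : (wv i 0 : W r N) = none := by simp [wv]

lemma ht_wv (i : Fin N) {h : ℕ} (hh : h ≤ 2 * r) : ht (wv i h : W r N) = h := by
  rcases Nat.eq_zero_or_pos h with h0 | h0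
  · simp [h0, wv_zero, ht]
  · have : h - 1 < 2 * r ∧ h ≠ 0 := ⟨by omega, by omega⟩
    simp only [wv, dif_pos this, ht]
    omega

lemma ht_le (x : W r N) : ht x ≤ 2 * r := by
  cases x with
  | none => simp [ht]
  | some a => simp [ht]

lemma some_eq_wv (i : Fin N) (s : Fin (2 * r)) :
    (some (i, s) : W r N) = wv i ((s : ℕ) + 1) := by
  have : (s : ℕ) + 1 - 1 < 2 * r ∧ (s : ℕ) + 1 ≠ 0 := ⟨by omega, by omega⟩
  simp only [wv, dif_pos this]
  congr 1

lemma some_eq_wv' (p : Fin N × Fin (2 * r)) :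
    (some p : W r N) = wv p.1 (ht (some p)) := by
  obtain ⟨i, s⟩ := p
  exact some_eq_wv i s

lemma wv_inj {i i' : Fin N} {a a' : ℕ} (ha : a ≤ 2 * r) (ha' : a' ≤ 2 * r)
    (h : (wv i a : W r N) = wv i' a') : a = a' ∧ (a = 0 ∨ i = i') := by
  have h1 : ht (wv i a : W r N) = a := ht_wv i ha
  have h2 : ht (wv i' a' : W r N) = a' := ht_wv i' ha'
  have haa : a = a' := by rw [← h1, ← h2, h]
  subst haa
  refine ⟨rfl, ?_⟩
  rcases Nat.eq_zero_or_pos a with h0 | h0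
  · exact Or.inl h0
  · right
    have : a - 1 < 2 * r ∧ a ≠ 0 := ⟨by omega, by omega⟩
    simp only [wv, dif_pos this, Option.some.injEq, Prod.mk.injEq] at h
    exact h.1

/-- The adjacency relation. -/
def adjRel (x y : W r N) : Prop :=
  (∀ a b, x = some a → y = some b → a.1 = b.1) ∧
  (ht x + 1 = ht y ∨ ht y + 1 = ht x ∨
    (ht x + 2 = ht y ∧ Even (ht x)) ∨ (ht y + 2 = ht x ∧ Even (ht y)))

variable (r N) in
/-- The windmill-of-triangle-chains graph. -/
def G : SimpleGraph (W r N) where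
  Adj := adjRel
  symm := by
    exact ⟨by rintro x y ⟨h1, h2⟩
              exact ⟨fun a b ha hb => (h1 b a hb ha).symm, by tauto⟩⟩
  loopless := ⟨by rintro x ⟨-, h2⟩; omega⟩

lemma adj_wv {i : Fin N} {a b : ℕ} (hb : b ≤ 2 * r)
    (hab : b = a + 1 ∨ (b = a + 2 ∧ Even a)) :
    (G r N).Adj (wv i a) (wv i b) := by
  have ha : a ≤ 2 * r := by omega
  constructor
  · rintro p q hp hq
    simp only [wv] at hp hq
    split_ifs at hp hq with h1 h2 <;> simp_all
    rw [← hp, ← hq]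
  · rw [ht_wv i ha, ht_wv i hb]
    tauto

/-- Structural description of an edge. -/
lemma adj_elim {x y : W r N} (h : (G r N).Adj x y) :
    ∃ i : Fin N, x = wv i (ht x) ∧ y = wv i (ht y) ∧
      (ht y = ht x + 1 ∨ (ht y = ht x + 2 ∧ Even (ht x)) ∨
       ht x = ht y + 1 ∨ (ht x = ht y + 2 ∧ Even (ht y))) := by
  obtain ⟨h1, h2⟩ := h
  have hx := ht_le x
  have hy := ht_le y
  cases x with
  | none =>
    cases y with
    | none => simp [ht] at h2
    | some q =>
      exact ⟨q.1, by simp [wv_zero, ht], (some_eq_wv' q), by tauto⟩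
  | some p =>
    cases y with
    | none => exact ⟨p.1, some_eq_wv' p, by simp [wv_zero, ht], by tauto⟩
    | some q =>
      have : p.1 = q.1 := h1 p q rfl rfl
      refine ⟨p.1, some_eq_wv' p, ?_, by tauto⟩
      rw [this]; exact some_eq_wv' q


/-! ### Coloring -/

/-- Numeric color of an edge, from the heights of its endpoints. -/
def cvalN (a b : ℕ) : ℕ :=
  3 * ((max a b - 1) / 2) +
    (if max a b = min a b + 2 then 0 else if max a b % 2 = 1 then 1 else 2)

def colN : Sym2 (W r N) → ℕ :=
  Sym2.lift ⟨fun x y => cvalN (ht x) (ht y), by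
    intro x y; simp [cvalN, Nat.max_comm, Nat.min_comm]⟩

variable (r N) in
def colF (hr : 0 < r) : Sym2 (W r N) → Fin (3 * r) := fun e =>
  ⟨colN e % (3 * r), Nat.mod_lt _ (by omega)⟩

lemma colN_mk (x y : W r N) : colN s(x, y) = cvalN (ht x) (ht y) := rfl

lemma colN_A (i j : Fin N) {τ : ℕ} (hτ : τ < r) :
    colN (s(wv i (2 * τ), wv j (2 * τ + 2)) : Sym2 (W r N)) = 3 * τ := by
  rw [colN_mk, ht_wv i (by omega), ht_wv j (by omega)]
  rw [cvalN, Nat.max_eq_right (by omega), Nat.min_eq_left (by omega), if_pos rfl]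
  omega

lemma colN_B (i j : Fin N) {τ : ℕ} (hτ : τ < r) :
    colN (s(wv i (2 * τ), wv j (2 * τ + 1)) : Sym2 (W r N)) = 3 * τ + 1 := by
  rw [colN_mk, ht_wv i (by omega), ht_wv j (by omega)]
  rw [cvalN, Nat.max_eq_right (by omega), Nat.min_eq_left (by omega), if_neg (by omega),
    if_pos (by omega)]
  omega

lemma colN_C (i j : Fin N) {τ : ℕ} (hτ : τ < r) :
    colN (s(wv i (2 * τ + 1), wv j (2 * τ + 2)) : Sym2 (W r N)) = 3 * τ + 2 := by
  rw [colN_mk, ht_wv i (by omega), ht_wv j (by omega)]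
  rw [cvalN, Nat.max_eq_right (by omega), Nat.min_eq_left (by omega), if_neg (by omega),
    if_neg (by omega)]
  omega

/-! ### Color list helpers -/

def AL (lo d : ℕ) : List ℕ := (List.range d).map (fun t => 3 * (lo + t))

def ZL (d : ℕ) : List ℕ := (List.range d).flatMap (fun t => [3 * t + 1, 3 * t + 2])

lemma mem_AL {x lo d : ℕ} : x ∈ AL lo d ↔ ∃ t, t < d ∧ x = 3 * (lo + t) := by
  simp [AL, eq_comm]

lemma mem_ZL {x d : ℕ} : x ∈ ZL d ↔ ∃ t, t < d ∧ (x = 3 * t + 1 ∨ x = 3 * t + 2) := by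
  simp [ZL, eq_comm]

lemma nodup_AL (lo d : ℕ) : (AL lo d).Nodup :=
  (List.nodup_range (n := d)).map_on (by intro x _ y _ h; omega)

lemma AL_succ (lo d : ℕ) : AL lo (d + 1) = 3 * lo :: AL (lo + 1) d := by
  simp only [AL, List.range_succ_eq_map, List.map_cons, List.map_map]
  congr 1
  apply List.map_congr_left
  intro t _
  simp only [Function.comp_apply]
  omega

lemma ZL_succ (d : ℕ) : ZL (d + 1) = ZL d ++ [3 * d + 1, 3 * d + 2] := by
  simp [ZL, List.range_succ]

lemma nodup_ZL (d : ℕ) : (ZL d).Nodup := by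
  induction d with
  | zero => simp [ZL]
  | succ d ih =>
    rw [ZL_succ, List.nodup_append]
    refine ⟨ih, by simp, ?_⟩
    rintro x hx _ hx' rfl
    rw [mem_ZL] at hx
    simp at hx'
    omega

/-! ### Walk primitives -/

lemma wv_congr (i : Fin N) {a b : ℕ} (h : a = b) : (wv i a : W r N) = wv i b := by rw [h]

open SimpleGraph Walk in
def spine (i : Fin N) : (lo d : ℕ) → (lo + d ≤ r) → (G r N).Walk (wv i (2 * lo)) (wv i (2 * lo + 2 * d))
  | _, 0, _ => Walk.nil
  | lo, d + 1, h =>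
    Walk.cons (adj_wv (by omega) (Or.inr ⟨rfl, ⟨lo, by omega⟩⟩))
      ((spine i (lo + 1) d (by omega)).copy (wv_congr i (by omega)) (wv_congr i (by omega)))

open SimpleGraph Walk in
def zig (i : Fin N) : (lo d : ℕ) → (lo + d ≤ r) → (G r N).Walk (wv i (2 * lo)) (wv i (2 * lo + 2 * d))
  | _, 0, _ => Walk.nil
  | lo, d + 1, h =>
    Walk.cons (adj_wv (by omega) (Or.inl rfl))
      (Walk.cons (adj_wv (by omega) (Or.inl rfl))
        ((zig i (lo + 1) d (by omega)).copy (wv_congr i (by omega)) (wv_congr i (by omega))))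

lemma spine_colN (i : Fin N) (lo d : ℕ) (h : lo + d ≤ r) :
    ((spine i lo d h).edges.map colN) = AL lo d := by
  induction d generalizing lo with
  | zero => simp [spine, AL]
  | succ d ih =>
    rw [spine, AL_succ]
    simp only [SimpleGraph.Walk.edges_cons, SimpleGraph.Walk.edges_copy, List.map_cons]
    rw [ih (lo + 1) (by omega)]
    congr 1
    have := colN_A (r := r) (N := N) i i (τ := lo) (by omega)
    simpa using this

lemma zig_colN (i : Fin N) (lo d : ℕ) (h : lo + d ≤ r) :
    ((zig i lo d h).edges.map colN) = (List.range d).flatMap (fun t => [3 * (lo + t) + 1, 3 * (lo + t) + 2]) := by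
  induction d generalizing lo with
  | zero => simp [zig]
  | succ d ih =>
    rw [zig]
    simp only [SimpleGraph.Walk.edges_cons, SimpleGraph.Walk.edges_copy, List.map_cons]
    rw [ih (lo + 1) (by omega)]
    rw [List.range_succ_eq_map]
    simp only [List.flatMap_cons, List.flatMap_map]
    congr 1
    · simpa using colN_B (r := r) (N := N) i i (τ := lo) (by omega)
    congr 1
    · have := colN_C (r := r) (N := N) i i (τ := lo) (by omega)
      simpa using this
    · apply List.flatMap_congr
      intro t _
      simp only [Function.comp_apply, List.cons.injEq, and_true]
      omega



/-! ### More color-list facts -/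

lemma mem_AL_facts {x lo d : ℕ} (h : x ∈ AL lo d) :
    x % 3 = 0 ∧ 3 * lo ≤ x ∧ x < 3 * (lo + d) := by
  rw [mem_AL] at h; obtain ⟨t, ht, rfl⟩ := h; omega

lemma mem_ZL_facts {x d : ℕ} (h : x ∈ ZL d) : x % 3 ≠ 0 ∧ x < 3 * d := by
  rw [mem_ZL] at h; obtain ⟨t, ht, h | h⟩ := h <;> omega

/-! ### Up-walk existence lemmas -/

open SimpleGraph

lemma ex_upA_even (i : Fin N) {k : ℕ} (hk : k ≤ r) :
    ∃ w : (G r N).Walk (wv i 0) (wv i (2 * k)),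
      w.edges.map colN = AL 0 k :=
  ⟨(spine i 0 k (by omega)).copy (wv_congr i (by omega)) (wv_congr i (by omega)),
    by simp [spine_colN]⟩

lemma ex_upA_odd (i : Fin N) {k : ℕ} (hk : k < r) :
    ∃ w : (G r N).Walk (wv i 0) (wv i (2 * k + 1)),
      w.edges.map colN = AL 0 k ++ [3 * k + 1] := by
  obtain ⟨w, hw⟩ := ex_upA_even (r := r) i (k := k) (by omega)
  refine ⟨w.concat (adj_wv (a := 2 * k) (b := 2 * k + 1) (by omega) (Or.inl rfl)), ?_⟩
  rw [Walk.edges_concat, List.concat_eq_append, List.map_append, hw]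
  simp [colN_B i i hk]

lemma zig0_colN (i : Fin N) (k : ℕ) (h : k ≤ r) :
    ((zig (r := r) i 0 k (by omega)).edges.map colN) = ZL k := by
  rw [zig_colN]
  unfold ZL
  apply List.flatMap_congr
  intro t _
  simp

lemma ex_upZ_even (i : Fin N) {k : ℕ} (hk : k ≤ r) :
    ∃ w : (G r N).Walk (wv i 0) (wv i (2 * k)),
      w.edges.map colN = ZL k :=
  ⟨((zig (r := r) i 0 k (by omega)).copy (wv_congr i (by omega)) (wv_congr i (by omega))),
    by rw [Walk.edges_copy]; exact zig0_colN i k hk⟩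

lemma ex_upZ_odd (i : Fin N) {k : ℕ} (hk : k < r) :
    ∃ w : (G r N).Walk (wv i 0) (wv i (2 * k + 1)),
      w.edges.map colN = ZL k ++ [3 * k + 1] := by
  obtain ⟨w, hw⟩ := ex_upZ_even (r := r) i (k := k) (by omega)
  refine ⟨w.concat (adj_wv (a := 2 * k) (b := 2 * k + 1) (by omega) (Or.inl rfl)), ?_⟩
  rw [Walk.edges_concat, List.concat_eq_append, List.map_append, hw]
  simp [colN_B i i hk]

lemma ex_upM_even (i : Fin N) {m k : ℕ} (hm : m < k) (hk : k ≤ r) :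
    ∃ w : (G r N).Walk (wv i 0) (wv i (2 * k)),
      w.edges.map colN = ZL m ++ [3 * m] ++ AL (m + 1) (k - (m + 1)) := by
  obtain ⟨w, hw⟩ := ex_upZ_even (r := r) i (k := m) (by omega)
  have hadj : (G r N).Adj (wv i (2 * m)) (wv i (2 * m + 2)) :=
    adj_wv (by omega) (Or.inr ⟨rfl, ⟨m, by omega⟩⟩)
  refine ⟨(w.concat hadj).append
    ((spine (r := r) i (m + 1) (k - (m + 1)) (by omega)).copy (wv_congr i (by omega))
      (wv_congr i (by omega))), ?_⟩
  rw [Walk.edges_append, Walk.edges_concat, Walk.edges_copy, List.concat_eq_append,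
    List.map_append, List.map_append, hw, spine_colN]
  have hA := colN_A (r := r) (N := N) i i (τ := m) (by omega)
  simp only [List.map_cons, List.map_nil, hA, List.append_assoc]

lemma ex_upM_odd (i : Fin N) {m k : ℕ} (hm : m < k) (hk : k < r) :
    ∃ w : (G r N).Walk (wv i 0) (wv i (2 * k + 1)),
      w.edges.map colN = (ZL m ++ [3 * m] ++ AL (m + 1) (k - (m + 1))) ++ [3 * k + 1] := by
  obtain ⟨w, hw⟩ := ex_upM_even (r := r) i hm (by omega)
  refine ⟨w.concat (adj_wv (a := 2 * k) (b := 2 * k + 1) (by omega) (Or.inl rfl)), ?_⟩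
  rw [Walk.edges_concat, List.concat_eq_append, List.map_append, hw]
  simp [colN_B i i hk]

/-- Down-walk from `v_{m+1} = w_{2m+1}` to the hub using the C-edge upward first. -/
lemma ex_downC (i : Fin N) {m : ℕ} (hm : m < r) :
    ∃ w : (G r N).Walk (wv i (2 * m + 1)) (wv i 0),
      w.edges.map colN = (3 * m + 2) :: (AL 0 (m + 1)).reverse := by
  obtain ⟨w, hw⟩ := ex_upA_even (r := r) i (k := m + 1) (by omega)
  have hadj : (G r N).Adj (wv i (2 * m + 1)) (wv i (2 * m + 2)) :=
    adj_wv (by omega) (Or.inl rfl)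
  refine ⟨Walk.cons hadj (w.reverse.copy (wv_congr i (by omega)) rfl), ?_⟩
  rw [Walk.edges_cons, Walk.edges_copy, Walk.edges_reverse, List.map_cons, List.map_reverse, hw]
  simp [colN_C i i (τ := m) hm]

/-! ### The main rainbow-walk existence lemma -/

lemma exists_good_walk (i i' : Fin N) {a b : ℕ} (ha : a ≤ 2 * r) (hb : b ≤ 2 * r) :
    ∃ w : (G r N).Walk (wv i a) (wv i' b),
      (w.edges.map colN).Nodup ∧ ∀ x ∈ w.edges.map colN, x < 3 * r := by
  -- glue: a down-walk in branch `i` and an up-walk in branch `i'`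
  have glue : ∀ (a' b' : ℕ) (dw : (G r N).Walk (wv i a') (wv i 0))
      (uw : (G r N).Walk (wv i' 0) (wv i' b')),
      ∃ w : (G r N).Walk (wv i a') (wv i' b'), w.edges = dw.edges ++ uw.edges := by
    intro a' b' dw uw
    refine ⟨dw.append (uw.copy (by rw [wv_zero, wv_zero]) rfl), ?_⟩
    rw [Walk.edges_append, Walk.edges_copy]
  rcases Nat.even_or_odd a with hae | hao
  · -- a even
    obtain ⟨ma, rfl⟩ := hae
    rw [show ma + ma = 2 * ma by omega]
    have hma : ma ≤ r := by omega
    obtain ⟨dw, hdw⟩ := ex_upA_even (r := r) i (k := ma) hma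
    rcases Nat.even_or_odd b with hbe | hbo
    · obtain ⟨kb, rfl⟩ := hbe
      rw [show kb + kb = 2 * kb by omega]
      obtain ⟨uw, huw⟩ := ex_upZ_even (r := r) i' (k := kb) (by omega)
      obtain ⟨w, hw⟩ := glue _ _ dw.reverse uw
      rw [Walk.edges_reverse] at hw
      refine ⟨w, ?_, ?_⟩ <;>
        rw [hw, List.map_append, List.map_reverse, hdw, huw]
      · rw [List.nodup_append]
        refine ⟨by simp [nodup_AL], nodup_ZL _, ?_⟩
        rintro x hx _ hx' rfl
        rw [List.mem_reverse] at hx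
        exact (mem_ZL_facts hx').1 (mem_AL_facts hx).1
      · intro x hx
        rcases List.mem_append.mp hx with hx | hx
        · rw [List.mem_reverse] at hx; have := mem_AL_facts hx; omega
        · have := mem_ZL_facts hx; omega
    · obtain ⟨kb, rfl⟩ := hbo
      obtain ⟨uw, huw⟩ := ex_upZ_odd (r := r) i' (k := kb) (by omega)
      obtain ⟨w, hw⟩ := glue _ _ dw.reverse uw
      rw [Walk.edges_reverse] at hw
      refine ⟨w, ?_, ?_⟩ <;>
        rw [hw, List.map_append, List.map_reverse, hdw, huw]
      · rw [List.nodup_append]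
        refine ⟨by simp [nodup_AL], ?_, ?_⟩
        · rw [List.nodup_append]
          refine ⟨nodup_ZL _, by simp, ?_⟩
          rintro x hx _ hx' rfl
          have := mem_ZL_facts hx
          simp at hx'
          omega
        · rintro x hx _ hx' rfl
          rw [List.mem_reverse] at hx
          have h1 := mem_AL_facts hx
          rcases List.mem_append.mp hx' with h | h
          · exact (mem_ZL_facts h).1 h1.1
          · simp at h; omega
      · intro x hx
        rcases List.mem_append.mp hx with hx | hx
        · rw [List.mem_reverse] at hx; have := mem_AL_facts hx; omega
        rcases List.mem_append.mp hx with hx | hx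
        · have := mem_ZL_facts hx; omega
        · simp at hx; omega
  · -- a odd
    obtain ⟨m, rfl⟩ := hao
    have hmr : m < r := by omega
    rcases Nat.even_or_odd b with hbe | hbo
    · -- b even
      obtain ⟨k, rfl⟩ := hbe
      rw [show k + k = 2 * k by omega]
      have hkr : k ≤ r := by omega
      rcases le_or_gt k m with hkm | hmk
      · -- m ≥ k : down-B, up zig
        obtain ⟨dw, hdw⟩ := ex_upA_odd (r := r) i (k := m) hmr
        obtain ⟨uw, huw⟩ := ex_upZ_even (r := r) i' (k := k) hkr
        obtain ⟨w, hw⟩ := glue _ _ dw.reverse uw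
        rw [Walk.edges_reverse] at hw
        refine ⟨w, ?_, ?_⟩ <;> rw [hw, List.map_append, List.map_reverse, hdw, huw]
        · rw [List.nodup_append]
          refine ⟨?_, nodup_ZL _, ?_⟩
          · rw [List.nodup_reverse, List.nodup_append]
            refine ⟨nodup_AL _ _, by simp, ?_⟩
            rintro x hx _ hx' rfl
            have := mem_AL_facts hx
            simp at hx'
            omega
          · rintro x hx _ hx' rfl
            rw [List.mem_reverse] at hx
            have h2 := mem_ZL_facts hx'
            rcases List.mem_append.mp hx with h | h
            · exact h2.1 (mem_AL_facts h).1
            · simp at h; omega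
        · intro x hx
          rcases List.mem_append.mp hx with hx | hx
          · rw [List.mem_reverse] at hx
            rcases List.mem_append.mp hx with h | h
            · have := mem_AL_facts h; omega
            · simp at h; omega
          · have := mem_ZL_facts hx; omega
      · -- m < k : down-B, up mixed
        obtain ⟨dw, hdw⟩ := ex_upA_odd (r := r) i (k := m) hmr
        obtain ⟨uw, huw⟩ := ex_upM_even (r := r) i' hmk hkr
        obtain ⟨w, hw⟩ := glue _ _ dw.reverse uw
        rw [Walk.edges_reverse] at hw
        refine ⟨w, ?_, ?_⟩ <;> rw [hw, List.map_append, List.map_reverse, hdw, huw]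
        · rw [List.nodup_append]
          refine ⟨?_, ?_, ?_⟩
          · rw [List.nodup_reverse, List.nodup_append]
            refine ⟨nodup_AL _ _, by simp, ?_⟩
            rintro x hx _ hx' rfl
            have := mem_AL_facts hx
            simp at hx'
            omega
          · rw [List.nodup_append, List.nodup_append]
            refine ⟨⟨nodup_ZL _, by simp, ?_⟩, nodup_AL _ _, ?_⟩
            · rintro x hx _ hx' rfl
              have := mem_ZL_facts hx
              simp at hx'
              omega
            · rintro x hx _ hx' rfl
              have h2 := mem_AL_facts hx'
              rcases List.mem_append.mp hx with h | h
              · have := mem_ZL_facts h; omega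
              · simp at h; omega
          · rintro x hx _ hx' rfl
            rw [List.mem_reverse] at hx
            rcases List.mem_append.mp hx with h | h
            · have h1 := mem_AL_facts h
              rcases List.mem_append.mp hx' with h' | h'
              · rcases List.mem_append.mp h' with h' | h'
                · exact (mem_ZL_facts h').1 h1.1
                · simp at h'; omega
              · have := mem_AL_facts h'; omega
            · simp at h
              rcases List.mem_append.mp hx' with h' | h'
              · rcases List.mem_append.mp h' with h' | h'
                · have := mem_ZL_facts h'; omega
                · simp at h'; omega
              · have := mem_AL_facts h'; omega
        · intro x hx
          rcases List.mem_append.mp hx with hx | hx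
          · rw [List.mem_reverse] at hx
            rcases List.mem_append.mp hx with h | h
            · have := mem_AL_facts h; omega
            · simp at h; omega
          rcases List.mem_append.mp hx with hx | hx
          · rcases List.mem_append.mp hx with h | h
            · have := mem_ZL_facts h; omega
            · simp at h; omega
          · have := mem_AL_facts hx; omega
    · -- b odd
      obtain ⟨k, rfl⟩ := hbo
      have hkr : k < r := by omega
      rcases lt_trichotomy m k with hmk | hmk | hmk
      · -- m < k : down-B, up mixed-odd
        obtain ⟨dw, hdw⟩ := ex_upA_odd (r := r) i (k := m) hmr
        obtain ⟨uw, huw⟩ := ex_upM_odd (r := r) i' hmk hkr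
        obtain ⟨w, hw⟩ := glue _ _ dw.reverse uw
        rw [Walk.edges_reverse] at hw
        refine ⟨w, ?_, ?_⟩ <;> rw [hw, List.map_append, List.map_reverse, hdw, huw]
        · rw [List.nodup_append]
          refine ⟨?_, ?_, ?_⟩
          · rw [List.nodup_reverse, List.nodup_append]
            refine ⟨nodup_AL _ _, by simp, ?_⟩
            rintro x hx _ hx' rfl
            have := mem_AL_facts hx
            simp at hx'
            omega
          · rw [List.nodup_append, List.nodup_append, List.nodup_append]
            refine ⟨⟨⟨nodup_ZL _, by simp, ?_⟩, nodup_AL _ _, ?_⟩, by simp, ?_⟩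
            · rintro x hx _ hx' rfl
              have := mem_ZL_facts hx
              simp at hx'
              omega
            · rintro x hx _ hx' rfl
              have h2 := mem_AL_facts hx'
              rcases List.mem_append.mp hx with h | h
              · have := mem_ZL_facts h; omega
              · simp at h; omega
            · rintro x hx _ hx' rfl
              simp at hx'
              subst hx'
              rcases List.mem_append.mp hx with h | h
              · rcases List.mem_append.mp h with h | h
                · have := mem_ZL_facts h; omega
                · simp at h; omega
              · have := mem_AL_facts h; omega
          · rintro x hx _ hx' rfl
            rw [List.mem_reverse] at hx
            have hx1 : x % 3 = 0 ∧ x < 3 * m ∨ x = 3 * m + 1 := by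
              rcases List.mem_append.mp hx with h | h
              · have := mem_AL_facts h; left; omega
              · simp at h; right; omega
            have hx2 : (x % 3 ≠ 0 ∧ x < 3 * m) ∨ x = 3 * m ∨
                (x % 3 = 0 ∧ 3 * (m + 1) ≤ x ∧ x < 3 * k) ∨ x = 3 * k + 1 := by
              rcases List.mem_append.mp hx' with h' | h'
              · rcases List.mem_append.mp h' with h' | h'
                · rcases List.mem_append.mp h' with h' | h'
                  · have := mem_ZL_facts h'; left; omega
                  · simp at h'; right; left; omega
                · have := mem_AL_facts h'; right; right; left; omega
              · simp at h'; right; right; right; omega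
            omega
        · intro x hx
          rcases List.mem_append.mp hx with hx | hx
          · rw [List.mem_reverse] at hx
            rcases List.mem_append.mp hx with h | h
            · have := mem_AL_facts h; omega
            · simp at h; omega
          rcases List.mem_append.mp hx with hx | hx
          · rcases List.mem_append.mp hx with h | h
            · rcases List.mem_append.mp h with h | h
              · have := mem_ZL_facts h; omega
              · simp at h; omega
            · have := mem_AL_facts h; omega
          · simp at hx; omega
      · -- m = k : down-C, up zig-odd
        subst hmk
        obtain ⟨dw, hdw⟩ := ex_downC (r := r) i hmr
        obtain ⟨uw, huw⟩ := ex_upZ_odd (r := r) i' hkr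
        obtain ⟨w, hw⟩ := glue _ _ dw uw
        refine ⟨w, ?_, ?_⟩ <;> rw [hw, List.map_append, hdw, huw]
        · rw [List.cons_append, List.nodup_cons]
          constructor
          · intro hx
            rcases List.mem_append.mp hx with h | h
            · rw [List.mem_reverse] at h; have := mem_AL_facts h; omega
            · rcases List.mem_append.mp h with h | h
              · have := mem_ZL_facts h; omega
              · simp at h
          · rw [List.nodup_append]
            refine ⟨by simp [nodup_AL], ?_, ?_⟩
            · rw [List.nodup_append]
              refine ⟨nodup_ZL _, by simp, ?_⟩
              rintro x hx _ hx' rfl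
              have := mem_ZL_facts hx
              simp at hx'
              omega
            · rintro x hx _ hx' rfl
              rw [List.mem_reverse] at hx
              have h1 := mem_AL_facts hx
              rcases List.mem_append.mp hx' with h | h
              · exact (mem_ZL_facts h).1 h1.1
              · simp at h; omega
        · intro x hx
          rcases List.mem_cons.mp hx with hx | hx
          · omega
          rcases List.mem_append.mp hx with hx | hx
          · rw [List.mem_reverse] at hx; have := mem_AL_facts hx; omega
          rcases List.mem_append.mp hx with hx | hx
          · have := mem_ZL_facts hx; omega
          · simp at hx; omega
      · -- m > k : down-B, up zig-odd
        obtain ⟨dw, hdw⟩ := ex_upA_odd (r := r) i (k := m) hmr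
        obtain ⟨uw, huw⟩ := ex_upZ_odd (r := r) i' hkr
        obtain ⟨w, hw⟩ := glue _ _ dw.reverse uw
        rw [Walk.edges_reverse] at hw
        refine ⟨w, ?_, ?_⟩ <;> rw [hw, List.map_append, List.map_reverse, hdw, huw]
        · rw [List.nodup_append]
          refine ⟨?_, ?_, ?_⟩
          · rw [List.nodup_reverse, List.nodup_append]
            refine ⟨nodup_AL _ _, by simp, ?_⟩
            rintro x hx _ hx' rfl
            have := mem_AL_facts hx
            simp at hx'
            omega
          · rw [List.nodup_append]
            refine ⟨nodup_ZL _, by simp, ?_⟩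
            rintro x hx _ hx' rfl
            have := mem_ZL_facts hx
            simp at hx'
            omega
          · rintro x hx _ hx' rfl
            rw [List.mem_reverse] at hx
            have hx1 : x % 3 = 0 ∧ x < 3 * m ∨ x = 3 * m + 1 := by
              rcases List.mem_append.mp hx with h | h
              · have := mem_AL_facts h; left; omega
              · simp at h; right; omega
            have hx2 : (x % 3 ≠ 0 ∧ x < 3 * k) ∨ x = 3 * k + 1 := by
              rcases List.mem_append.mp hx' with h' | h'
              · have := mem_ZL_facts h'; left; omega
              · simp at h'; right; omega
            omega
        · intro x hx
          rcases List.mem_append.mp hx with hx | hx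
          · rw [List.mem_reverse] at hx
            rcases List.mem_append.mp hx with h | h
            · have := mem_AL_facts h; omega
            · simp at h; omega
          rcases List.mem_append.mp hx with hx | hx
          · have := mem_ZL_facts hx; omega
          · simp at hx; omega


/-! ### Representation of vertices -/

lemma exists_rep (hN : 0 < N) (x : W r N) : ∃ (i : Fin N) (a : ℕ), a ≤ 2 * r ∧ x = wv i a := by
  cases x with
  | none => exact ⟨⟨0, hN⟩, 0, by omega, (wv_zero _).symm⟩
  | some p => exact ⟨p.1, ht (some p), ht_le _, some_eq_wv' p⟩

/-! ### The coloring is rainbow -/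

lemma isRainbow_colF (hr : 0 < r) (hN : 0 < N) :
    (G r N).IsRainbowColoring (colF r N hr) := by
  intro u v
  obtain ⟨i, a, ha, rfl⟩ := exists_rep hN u
  obtain ⟨i', b, hb, rfl⟩ := exists_rep hN v
  obtain ⟨w, hnd, hlt⟩ := exists_good_walk i i' ha hb
  have hmap : (w.edges.map (colF r N hr)).map Fin.val = w.edges.map colN := by
    rw [List.map_map]
    apply List.map_congr_left
    intro e he
    simp only [Function.comp_apply, colF]
    exact Nat.mod_eq_of_lt (hlt (colN e) (List.mem_map_of_mem (f := colN) he))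
  have hnd' : (w.edges.map (colF r N hr)).Nodup := by
    apply List.Nodup.of_map Fin.val
    rw [hmap]; exact hnd
  refine ⟨w.bypass, w.bypass_isPath, ?_⟩
  apply List.Nodup.map_on ?_ w.bypass_isPath.isTrail.edges_nodup
  intro e he e' he' hco
  exact List.inj_on_of_nodup_map hnd' (w.edges_bypass_subset he)
    (w.edges_bypass_subset he') hco

/-! ### Connectivity -/

lemma connected_G (hN : 0 < N) : (G r N).Connected := by
  rw [SimpleGraph.connected_iff]
  refine ⟨?_, ⟨none⟩⟩
  intro u v
  obtain ⟨i, a, ha, rfl⟩ := exists_rep hN u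
  obtain ⟨i', b, hb, rfl⟩ := exists_rep hN v
  obtain ⟨w, -, -⟩ := exists_good_walk i i' ha hb
  exact ⟨w⟩

/-! ### Every edge lies in a triangle -/

lemma triangle_G {x y : W r N} (h : (G r N).Adj x y) :
    ∃ z, (G r N).Adj x z ∧ (G r N).Adj y z := by
  obtain ⟨i, hx, hy, hc⟩ := adj_elim h
  have hhx : ht x ≤ 2 * r := ht_le x
  have hhy : ht y ≤ 2 * r := ht_le y
  have key : ∀ (u v : W r N) (a : ℕ), a ≤ 2 * r → 2 * r ≥ a + 1 → u = wv i a →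
      v = wv i (a + 1) → ∃ z, (G r N).Adj u z ∧ (G r N).Adj v z := by
    intro u v a ha1 ha2 hu hv
    subst hu hv
    rcases Nat.even_or_odd a with hae | hao
    · -- a even: third vertex is a + 2
      have h2 : a + 2 ≤ 2 * r := by
        rcases hae with ⟨t, rfl⟩; omega
      exact ⟨wv i (a + 2), adj_wv h2 (Or.inr ⟨rfl, hae⟩), adj_wv h2 (Or.inl rfl)⟩
    · -- a odd: third vertex is a - 1
      obtain ⟨t, rfl⟩ := hao
      refine ⟨wv i (2 * t), ?_, ?_⟩
      · exact ((G r N).adj_symm (adj_wv (by omega) (Or.inl rfl)))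
      · exact ((G r N).adj_symm (adj_wv (by omega) (Or.inr ⟨rfl, ⟨t, by omega⟩⟩)))
  rcases hc with h1 | h1 | h1 | h1
  · exact key x y (ht x) hhx (by omega) hx (by rw [← h1]; exact hy)
  · -- ht y = ht x + 2, Even (ht x): third vertex a+1
    obtain ⟨h1, h2⟩ := h1
    have hxz : (G r N).Adj (wv i (ht x)) (wv i (ht x + 1)) :=
      adj_wv (by omega) (Or.inl rfl)
    have hyz : (G r N).Adj (wv i (ht x + 2)) (wv i (ht x + 1)) :=
      (G r N).adj_symm (adj_wv (a := ht x + 1) (b := ht x + 2) (by omega) (Or.inl (by omega)))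
    rw [← hx] at hxz
    rw [← h1, ← hy] at hyz
    exact ⟨wv i (ht x + 1), hxz, hyz⟩
  · obtain ⟨z, hz1, hz2⟩ := key y x (ht y) hhy (by omega) hy (by rw [← h1]; exact hx)
    exact ⟨z, hz2, hz1⟩
  · -- ht x = ht y + 2, Even (ht y): third vertex ht y + 1
    obtain ⟨h1, h2⟩ := h1
    have hxz : (G r N).Adj (wv i (ht y + 2)) (wv i (ht y + 1)) :=
      (G r N).adj_symm (adj_wv (a := ht y + 1) (b := ht y + 2) (by omega) (Or.inl (by omega)))
    have hyz : (G r N).Adj (wv i (ht y)) (wv i (ht y + 1)) :=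
      adj_wv (by omega) (Or.inl rfl)
    rw [← h1, ← hx] at hxz
    rw [← hy] at hyz
    exact ⟨wv i (ht y + 1), hxz, hyz⟩


/-! ### Bridgeless from triangles -/

lemma bridgeless_of_triangles {V : Type*} (G : SimpleGraph V) (hc : G.Connected)
    (htri : ∀ u v : V, G.Adj u v → ∃ w, G.Adj u w ∧ G.Adj v w) : G.Bridgeless := by
  refine ⟨hc, ?_⟩
  intro e he
  induction e with
  | _ u v =>
    rw [SimpleGraph.isBridge_iff]
    intro hreach
    obtain ⟨w, hw1, hw2⟩ := htri u v (by rwa [SimpleGraph.mem_edgeSet] at he)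
    apply hreach
    have h1 : (G \ SimpleGraph.fromEdgeSet {s(u, v)}).Adj u w := by
      refine ⟨hw1, ?_⟩
      simp only [SimpleGraph.fromEdgeSet_adj, Set.mem_singleton_iff]
      rintro ⟨h, -⟩
      rw [Sym2.congr_right] at h
      exact (G.ne_of_adj hw2) h.symm
    have h2 : (G \ SimpleGraph.fromEdgeSet {s(u, v)}).Adj w v := by
      refine ⟨hw2.symm, ?_⟩
      simp only [SimpleGraph.fromEdgeSet_adj, Set.mem_singleton_iff]
      rintro ⟨h, -⟩
      rw [Sym2.congr_left] at h
      exact (G.ne_of_adj hw1) h.symm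
    exact ⟨SimpleGraph.Walk.cons h1 (SimpleGraph.Walk.cons h2 SimpleGraph.Walk.nil)⟩

/-! ### Radius -/

lemma walk_potential (f : W r N → ℕ) (hf : ∀ x y, (G r N).Adj x y → f x ≤ f y + 2)
    {u v : W r N} (p : (G r N).Walk u v) : f u ≤ f v + 2 * p.length := by
  induction p with
  | nil => simp
  | cons h p ih =>
    have := hf _ _ h
    rw [SimpleGraph.Walk.length_cons]
    omega

lemma dist_hub_le (hN : 0 < N) (y : W r N) : (G r N).dist none y ≤ r := by
  obtain ⟨i, b, hb, rfl⟩ := exists_rep hN y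
  rcases Nat.even_or_odd b with ⟨k, rfl⟩ | ⟨k, rfl⟩
  · obtain ⟨w, hw⟩ := ex_upA_even (r := r) i (k := k) (by omega)
    calc (G r N).dist none (wv i (k + k))
        ≤ (w.copy (wv_zero i) (wv_congr i (by omega))).length := SimpleGraph.dist_le _
      _ = w.edges.length := by rw [SimpleGraph.Walk.length_copy, ← SimpleGraph.Walk.length_edges]
      _ = k := by rw [← List.length_map (as := w.edges) colN, hw]; simp [AL]
      _ ≤ r := by omega
  · obtain ⟨w, hw⟩ := ex_upA_odd (r := r) i (k := k) (by omega)
    calc (G r N).dist none (wv i (2 * k + 1))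
        ≤ (w.copy (wv_zero i) rfl).length := SimpleGraph.dist_le _
      _ = w.edges.length := by rw [SimpleGraph.Walk.length_copy, ← SimpleGraph.Walk.length_edges]
      _ = k + 1 := by rw [← List.length_map (as := w.edges) colN, hw]; simp [AL]
      _ ≤ r := by omega

lemma adj_ht_diff {x y : W r N} (h : (G r N).Adj x y) : ht x ≤ ht y + 2 ∧ ht y ≤ ht x + 2 := by
  obtain ⟨-, -, -, hc⟩ := adj_elim h
  omega

lemma dist_hub_tip (hc : (G r N).Connected) (i : Fin N) :
    r ≤ (G r N).dist none (wv i (2 * r)) := by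
  obtain ⟨p, hp⟩ := hc.exists_walk_length_eq_dist none (wv i (2 * r))
  have := walk_potential (fun y => 2 * r - ht y) ?_ p
  · rw [ht_wv i (le_refl _), ht] at this
    omega
  · intro x y h
    have h1 := adj_ht_diff h
    have h2 := ht_le (N := N) (r := r) x
    have h3 := ht_le (N := N) (r := r) y
    omega

lemma eccent_hub (hr : 0 < r) (hN : 0 < N) (hc : (G r N).Connected) :
    (G r N).finEccent none = r := by
  apply le_antisymm
  · exact Finset.sup_le fun y _ => dist_hub_le hN y
  · have h := dist_hub_tip hc ⟨0, hN⟩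
    calc r ≤ (G r N).dist none (wv ⟨0, hN⟩ (2 * r)) := h
      _ ≤ (G r N).finEccent none := Finset.le_sup (Finset.mem_univ _)

def pot (i' : Fin N) : W r N → ℕ
  | none => 2 * r
  | some (m, t) => if m = i' then 2 * r - ((t : ℕ) + 1) else 2 * r + ((t : ℕ) + 1)

lemma pot_none (i' : Fin N) : pot (r := r) i' none = 2 * r := rfl

lemma pot_some (i' m : Fin N) (t : Fin (2 * r)) :
    pot i' (some (m, t)) = if m = i' then 2 * r - ((t : ℕ) + 1) else 2 * r + ((t : ℕ) + 1) := rfl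

lemma eccent_ge (hr : 0 < r) (hN : 2 ≤ N) (hc : (G r N).Connected) (x : W r N) :
    r ≤ (G r N).finEccent x := by
  cases x with
  | none => rw [eccent_hub hr (by omega) hc]
  | some p =>
    obtain ⟨i, s⟩ := p
    obtain ⟨i', hi'⟩ : ∃ i' : Fin N, i' ≠ i :=
      Fintype.exists_ne_of_one_lt_card (by simp; omega) i
    obtain ⟨q, hq⟩ := hc.exists_walk_length_eq_dist (some (i, s)) (wv i' (2 * r))
    have hpot := walk_potential (pot i') ?_ q
    · have h2r : (1 : ℕ) ≤ 2 * r := by omega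
      have hwv : (wv i' (2 * r) : W r N) = some (i', ⟨2 * r - 1, by omega⟩) := by
        simp only [wv, dif_pos (⟨by omega, by omega⟩ : 2 * r - 1 < 2 * r ∧ 2 * r ≠ 0)]
      simp only [hwv, pot_some, if_pos rfl, if_neg hi'.symm, Fin.val_mk, if_true, eq_self_iff_true] at hpot
      have hs : (s : ℕ) < 2 * r := s.2
      have hq' : q.length = (G r N).dist (some (i, s)) (wv i' (2 * r)) := hq
      calc r ≤ (G r N).dist (some (i, s)) (wv i' (2 * r)) := by omega
        _ ≤ (G r N).finEccent (some (i, s)) := Finset.le_sup (Finset.mem_univ _)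
    · rintro x y h
      have hd := adj_ht_diff h
      cases x with
      | none =>
        cases y with
        | none => simp [pot_none]
        | some q2 =>
          obtain ⟨m, t⟩ := q2
          have e2 : ht (some (m, t) : W r N) = (t : ℕ) + 1 := rfl
          have e0 : ht (none : W r N) = 0 := rfl
          rw [pot_none, pot_some]
          split <;> omega
      | some q1 =>
        obtain ⟨m1, t1⟩ := q1
        cases y with
        | none =>
          have e1 : ht (some (m1, t1) : W r N) = (t1 : ℕ) + 1 := rfl
          have e0 : ht (none : W r N) = 0 := rfl
          rw [pot_none, pot_some]
          split <;> omega
        | some q2 =>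
          obtain ⟨m2, t2⟩ := q2
          have hm : m1 = m2 := h.1 (m1, t1) (m2, t2) rfl rfl
          subst hm
          have e1 : ht (some (m1, t1) : W r N) = (t1 : ℕ) + 1 := rfl
          have e2 : ht (some (m1, t2) : W r N) = (t2 : ℕ) + 1 := rfl
          rw [pot_some, pot_some]
          split <;> omega

lemma radius_eq (hr : 0 < r) (hN : 2 ≤ N) : (G r N).finRadius = r := by
  have hc := connected_G (r := r) (N := N) (by omega)
  rw [SimpleGraph.finRadius]
  apply le_antisymm
  · exact Nat.sInf_le ⟨none, eccent_hub hr (by omega) hc⟩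
  · refine le_csInf ⟨r, ⟨none, eccent_hub hr (by omega) hc⟩⟩ ?_
    rintro b ⟨x, rfl⟩
    exact eccent_ge hr hN hc x


/-! ### Lower bound machinery -/

open SimpleGraph

/-- The three edges of the level-`τ` gadget in branch `m`. -/
def eA (m : Fin N) (τ : ℕ) : Sym2 (W r N) := s(wv m (2 * τ), wv m (2 * τ + 2))
def eB (m : Fin N) (τ : ℕ) : Sym2 (W r N) := s(wv m (2 * τ), wv m (2 * τ + 1))
def eC (m : Fin N) (τ : ℕ) : Sym2 (W r N) := s(wv m (2 * τ + 1), wv m (2 * τ + 2))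

/-- Sum of heights of the two endpoints of an edge. -/
def hsum : Sym2 (W r N) → ℕ := Sym2.lift ⟨fun x y => ht x + ht y, fun x y => add_comm (ht x) (ht y)⟩

lemma hsum_mk (x y : W r N) : hsum s(x, y) = ht x + ht y := rfl

lemma hsum_eA {m : Fin N} {τ : ℕ} (hτ : τ < r) : hsum (eA (r := r) m τ) = 4 * τ + 2 := by
  rw [eA, hsum_mk, ht_wv m (by omega), ht_wv m (by omega)]; omega

lemma hsum_eB {m : Fin N} {τ : ℕ} (hτ : τ < r) : hsum (eB (r := r) m τ) = 4 * τ + 1 := by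
  rw [eB, hsum_mk, ht_wv m (by omega), ht_wv m (by omega)]; omega

lemma hsum_eC {m : Fin N} {τ : ℕ} (hτ : τ < r) : hsum (eC (r := r) m τ) = 4 * τ + 3 := by
  rw [eC, hsum_mk, ht_wv m (by omega), ht_wv m (by omega)]; omega

/-- Distinctness of same-level gadget edges in distinct branches. -/
lemma gadget_edge_ne {i i' : Fin N} (hii : i ≠ i') {a b a' b' : ℕ}
    (hab : a < b) (hb : b ≤ 2 * r) (hab' : a' < b') (hb' : b' ≤ 2 * r) :
    (s(wv i a, wv i b) : Sym2 (W r N)) ≠ s(wv i' a', wv i' b') := by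
  intro h
  rw [Sym2.eq_iff] at h
  rcases h with ⟨h1, h2⟩ | ⟨h1, h2⟩
  · obtain ⟨hb1, hb2⟩ := wv_inj (by omega) (by omega) h2
    rcases hb2 with h | h
    · omega
    · exact hii h
  · obtain ⟨hb1, hb2⟩ := wv_inj (by omega) (by omega) h2
    obtain ⟨ha1, -⟩ := wv_inj (by omega) (by omega) h1
    omega

/-- The generic crossing lemma. -/
lemma crossing {P : W r N → Prop} : ∀ {u v : W r N} (p : (G r N).Walk u v),
    P u → ¬ P v → ∃ x y, P x ∧ ¬ P y ∧ (G r N).Adj x y ∧ s(x, y) ∈ p.edges := by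
  intro u v p
  induction p with
  | nil => intro hu hv; exact absurd hu hv
  | @cons a b cc h q ih =>
    intro hu hv
    by_cases hz : P b
    · obtain ⟨x, y, h1, h2, h3, h4⟩ := ih hz hv
      exact ⟨x, y, h1, h2, h3, List.mem_cons_of_mem _ h4⟩
    · exact ⟨a, b, hu, hz, h, by simp⟩

/-- The "deep region" of branch `i`: vertices of branch `i` at height at least `h`. -/
def Rg (i : Fin N) (h : ℕ) (y : W r N) : Prop :=
  ∃ s : Fin (2 * r), y = some (i, s) ∧ h ≤ (s : ℕ) + 1

lemma Rg_of {i : Fin N} {h a : ℕ} (h1 : 1 ≤ a) (h2 : a ≤ 2 * r) (h3 : h ≤ a) :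
    Rg i h (wv i a : W r N) := by
  refine ⟨⟨a - 1, by omega⟩, ?_, by show h ≤ a - 1 + 1; omega⟩
  simp only [wv, dif_pos (⟨by omega, by omega⟩ : a - 1 < 2 * r ∧ a ≠ 0)]

lemma branch_eq {x : W r N} {i j : Fin N} {s : Fin (2 * r)}
    (h1 : x = some (i, s)) (h2 : x = wv j (ht x)) : j = i := by
  rw [h1] at h2
  have : ht (some (i, s) : W r N) = (s : ℕ) + 1 := rfl
  rw [this] at h2
  simp only [wv, dif_pos (⟨by omega, by omega⟩ : (s : ℕ) + 1 - 1 < 2 * r ∧ (s : ℕ) + 1 ≠ 0),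
    Option.some.injEq, Prod.mk.injEq] at h2
  exact h2.1.symm

/-- Classification of edges leaving the region at threshold `2τ+1`. -/
lemma cross_lo {i : Fin N} {τ : ℕ} (hτ : τ < r) {x y : W r N}
    (hadj : (G r N).Adj x y) (hx : Rg i (2 * τ + 1) x) (hy : ¬ Rg i (2 * τ + 1) y) :
    s(x, y) = eB (r := r) i τ ∨ s(x, y) = eA (r := r) i τ := by
  obtain ⟨j, hx1, hy1, hc⟩ := adj_elim hadj
  obtain ⟨sx, hxs, hsx⟩ := hx
  have hij : j = i := branch_eq hxs hx1
  subst hij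
  have hxht : ht x = (sx : ℕ) + 1 := by rw [hxs]; rfl
  have hyle : ht y ≤ 2 * τ := by
    by_contra hcon
    push_neg at hcon
    exact hy (hy1 ▸ Rg_of (by omega) (ht_le y) (by omega))
  have hxge : 2 * τ + 1 ≤ ht x := by omega
  rcases hc with h1 | ⟨h1, h2⟩ | h1 | ⟨h1, h2⟩
  · omega
  · omega
  · -- ht x = ht y + 1 : this is the B-edge
    left
    have hxv : x = wv j (2 * τ + 1) := hx1.trans (wv_congr j (by omega))
    have hyv : y = wv j (2 * τ) := hy1.trans (wv_congr j (by omega))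
    rw [hxv, hyv, eB]
    exact Sym2.eq_swap
  · -- ht x = ht y + 2, Even (ht y) : the A-edge
    right
    obtain ⟨t, h3⟩ := h2
    have hxv : x = wv j (2 * τ + 2) := hx1.trans (wv_congr j (by omega))
    have hyv : y = wv j (2 * τ) := hy1.trans (wv_congr j (by omega))
    rw [hxv, hyv, eA]
    exact Sym2.eq_swap

/-- Classification of edges leaving the region at threshold `2τ+2`. -/
lemma cross_hi {i : Fin N} {τ : ℕ} (hτ : τ < r) {x y : W r N}
    (hadj : (G r N).Adj x y) (hx : Rg i (2 * τ + 2) x) (hy : ¬ Rg i (2 * τ + 2) y) :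
    s(x, y) = eC (r := r) i τ ∨ s(x, y) = eA (r := r) i τ := by
  obtain ⟨j, hx1, hy1, hc⟩ := adj_elim hadj
  obtain ⟨sx, hxs, hsx⟩ := hx
  have hij : j = i := branch_eq hxs hx1
  subst hij
  have hxht : ht x = (sx : ℕ) + 1 := by rw [hxs]; rfl
  have hyle : ht y ≤ 2 * τ + 1 := by
    by_contra hcon
    push_neg at hcon
    exact hy (hy1 ▸ Rg_of (by omega) (ht_le y) (by omega))
  have hxge : 2 * τ + 2 ≤ ht x := by omega
  rcases hc with h1 | ⟨h1, h2⟩ | h1 | ⟨h1, h2⟩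
  · omega
  · omega
  · -- ht x = ht y + 1 : the C-edge
    left
    have hxv : x = wv j (2 * τ + 2) := hx1.trans (wv_congr j (by omega))
    have hyv : y = wv j (2 * τ + 1) := hy1.trans (wv_congr j (by omega))
    rw [hxv, hyv, eC]
    exact Sym2.eq_swap
  · -- ht x = ht y + 2, Even (ht y) : the A-edge
    right
    obtain ⟨t, h3⟩ := h2
    have hxv : x = wv j (2 * τ + 2) := hx1.trans (wv_congr j (by omega))
    have hyv : y = wv j (2 * τ) := hy1.trans (wv_congr j (by omega))
    rw [hxv, hyv, eA]
    exact Sym2.eq_swap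

lemma not_Rg_other {i i' : Fin N} (hii : i ≠ i') {h a : ℕ} (ha : a ≤ 2 * r) :
    ¬ Rg i h (wv i' a : W r N) := by
  rintro ⟨s, hs, -⟩
  rcases Nat.eq_zero_or_pos a with h0 | h0
  · rw [h0, wv_zero] at hs; simp at hs
  · simp only [wv, dif_pos (⟨by omega, by omega⟩ : a - 1 < 2 * r ∧ a ≠ 0),
      Option.some.injEq, Prod.mk.injEq] at hs
    exact hii hs.1.symm

/-- Any tip-to-tip walk hits each gadget of the first branch. -/
lemma gadget_hit (hr : 0 < r) {i i' : Fin N} (hii : i ≠ i') {τ : ℕ} (hτ : τ < r)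
    (p : (G r N).Walk (wv i (2 * r)) (wv i' (2 * r))) :
    eA (r := r) i τ ∈ p.edges ∨
      (eB (r := r) i τ ∈ p.edges ∧ eC (r := r) i τ ∈ p.edges) := by
  have hstart_lo : Rg i (2 * τ + 1) (wv i (2 * r) : W r N) := Rg_of (by omega) le_rfl (by omega)
  have hstart_hi : Rg i (2 * τ + 2) (wv i (2 * r) : W r N) := Rg_of (by omega) le_rfl (by omega)
  have hend_lo : ¬ Rg i (2 * τ + 1) (wv i' (2 * r) : W r N) := not_Rg_other hii le_rfl
  have hend_hi : ¬ Rg i (2 * τ + 2) (wv i' (2 * r) : W r N) := not_Rg_other hii le_rfl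
  obtain ⟨x1, y1, ha1, hb1, hc1, hd1⟩ := crossing p hstart_lo hend_lo
  obtain ⟨x2, y2, ha2, hb2, hc2, hd2⟩ := crossing p hstart_hi hend_hi
  rcases cross_lo hτ hc1 ha1 hb1 with h1 | h1
  · rcases cross_hi hτ hc2 ha2 hb2 with h2 | h2
    · exact Or.inr ⟨h1 ▸ hd1, h2 ▸ hd2⟩
    · exact Or.inl (h2 ▸ hd2)
  · exact Or.inl (h1 ▸ hd1)


lemma card_three {α : Type*} [DecidableEq α] {s : Finset α} {x y z : α}
    (hx : x ∈ s) (hy : y ∈ s) (hz : z ∈ s) (hxy : x ≠ y) (hxz : x ≠ z) (hyz : y ≠ z) :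
    3 ≤ s.card := by
  have hsub : ({x, y, z} : Finset α) ⊆ s := by
    intro a ha
    simp only [Finset.mem_insert, Finset.mem_singleton] at ha
    rcases ha with rfl | rfl | rfl <;> assumption
  calc 3 = ({x, y, z} : Finset α).card := by
        rw [Finset.card_insert_of_notMem (by simp [hxy, hxz]),
          Finset.card_insert_of_notMem (by simp [hyz]), Finset.card_singleton]
    _ ≤ s.card := Finset.card_le_card hsub

lemma hsum_ne {e e' : Sym2 (W r N)} (h : hsum e ≠ hsum e') : e ≠ e' :=
  fun hh => h (by rw [hh])

lemma rc_lower (hr : 0 < r) (hN : (3 * r) ^ r < N) {k : ℕ}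
    (c : Sym2 (W r N) → Fin k) (hc : (G r N).IsRainbowColoring c) : 3 * r - 1 ≤ k := by
  classical
  by_contra hcon
  push_neg at hcon
  have hk : k ≤ 3 * r - 2 := by omega
  have hcard : Fintype.card (Fin r → Fin k) < Fintype.card (Fin N) := by
    rw [Fintype.card_fun, Fintype.card_fin, Fintype.card_fin, Fintype.card_fin]
    calc k ^ r ≤ (3 * r) ^ r := Nat.pow_le_pow_left (by omega) r
      _ < N := hN
  obtain ⟨i, i', hii, hT⟩ := Fintype.exists_ne_map_eq_of_card_lt
    (fun (m : Fin N) => fun (j : Fin r) => c (eA (r := r) m (j : ℕ))) hcard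
  obtain ⟨p, hp, hnd⟩ := hc (wv i (2 * r)) (wv i' (2 * r))
  have hlen : p.edges.length ≤ k := by
    have h2 := List.Nodup.length_le_card hnd
    rwa [List.length_map, Fintype.card_fin] at h2
  set F := p.edges.toFinset with hFdef
  have hFk : F.card ≤ k := le_trans (List.toFinset_card_le _) hlen
  have hA : ∀ τ, τ < r → ¬ (eA (r := r) i τ ∈ p.edges ∧ eA (r := r) i' τ ∈ p.edges) := by
    rintro τ hτ ⟨h1, h2⟩
    have hcc : c (eA (r := r) i τ) = c (eA (r := r) i' τ) := by
      have := congrFun hT ⟨τ, hτ⟩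
      simpa using this
    have hne : eA (r := r) i τ ≠ eA (r := r) i' τ :=
      gadget_edge_ne hii (by omega) (by omega) (by omega) (by omega)
    exact hne (List.inj_on_of_nodup_map hnd h1 h2 hcc)
  have hit_i : ∀ {τ}, τ < r → eA (r := r) i τ ∈ p.edges ∨
      (eB (r := r) i τ ∈ p.edges ∧ eC (r := r) i τ ∈ p.edges) :=
    fun hτ => gadget_hit hr hii hτ p
  have hit_i' : ∀ {τ}, τ < r → eA (r := r) i' τ ∈ p.edges ∨
      (eB (r := r) i' τ ∈ p.edges ∧ eC (r := r) i' τ ∈ p.edges) := by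
    intro τ hτ
    have := gadget_hit hr hii.symm hτ p.reverse
    simpa only [SimpleGraph.Walk.edges_reverse, List.mem_reverse] using this
  set g : ℕ → Finset (Sym2 (W r N)) := fun τ =>
    F ∩ {eA (r := r) i τ, eB (r := r) i τ, eC (r := r) i τ,
      eA (r := r) i' τ, eB (r := r) i' τ, eC (r := r) i' τ} with hgdef
  have hmemg : ∀ τ (e : Sym2 (W r N)), e ∈ p.edges →
      (e = eA (r := r) i τ ∨ e = eB (r := r) i τ ∨ e = eC (r := r) i τ ∨
       e = eA (r := r) i' τ ∨ e = eB (r := r) i' τ ∨ e = eC (r := r) i' τ) → e ∈ g τ := by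
    intro τ e he hor
    rw [hgdef]
    refine Finset.mem_inter.mpr ⟨List.mem_toFinset.mpr he, ?_⟩
    simp only [Finset.mem_insert, Finset.mem_singleton]
    tauto
  have hg3 : ∀ τ ∈ Finset.range r, 3 ≤ (g τ).card := by
    intro τ hτr
    rw [Finset.mem_range] at hτr
    have neAB : eA (r := r) i τ ≠ eB (r := r) i' τ :=
      hsum_ne (by rw [hsum_eA hτr, hsum_eB hτr]; omega)
    have neAC : eA (r := r) i τ ≠ eC (r := r) i' τ :=
      hsum_ne (by rw [hsum_eA hτr, hsum_eC hτr]; omega)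
    have neBC : ∀ m m' : Fin N, eB (r := r) m τ ≠ eC (r := r) m' τ := fun m m' =>
      hsum_ne (by rw [hsum_eB hτr, hsum_eC hτr]; omega)
    have neBA : ∀ m m' : Fin N, eB (r := r) m τ ≠ eA (r := r) m' τ := fun m m' =>
      hsum_ne (by rw [hsum_eB hτr, hsum_eA hτr]; omega)
    have neCA : ∀ m m' : Fin N, eC (r := r) m τ ≠ eA (r := r) m' τ := fun m m' =>
      hsum_ne (by rw [hsum_eC hτr, hsum_eA hτr]; omega)
    have neBB : eB (r := r) i τ ≠ eB (r := r) i' τ :=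
      gadget_edge_ne hii (by omega) (by omega) (by omega) (by omega)
    have neCB : eC (r := r) i τ ≠ eB (r := r) i' τ :=
      hsum_ne (by rw [hsum_eC hτr, hsum_eB hτr]; omega)
    rcases hit_i hτr with h1 | ⟨h1, h1'⟩
    · rcases hit_i' hτr with h2 | ⟨h2, h2'⟩
      · exact absurd ⟨h1, h2⟩ (hA τ hτr)
      · exact card_three (hmemg τ _ h1 (by tauto)) (hmemg τ _ h2 (by tauto))
          (hmemg τ _ h2' (by tauto)) neAB neAC (neBC i' i')
    · rcases hit_i' hτr with h2 | ⟨h2, h2'⟩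
      · exact card_three (hmemg τ _ h1 (by tauto)) (hmemg τ _ h1' (by tauto))
          (hmemg τ _ h2 (by tauto)) (neBC i i) (neBA i i') (neCA i i')
      · exact card_three (hmemg τ _ h1 (by tauto)) (hmemg τ _ h1' (by tauto))
          (hmemg τ _ h2 (by tauto)) (neBC i i) neBB neCB
  have hsum_bound : ∀ τ, τ < r → ∀ e ∈ g τ, 4 * τ + 1 ≤ hsum e ∧ hsum e ≤ 4 * τ + 3 := by
    intro τ hτr e he
    rw [hgdef] at he
    have he2 := (Finset.mem_inter.mp he).2
    simp only [Finset.mem_insert, Finset.mem_singleton] at he2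
    rcases he2 with rfl | rfl | rfl | rfl | rfl | rfl <;>
      first
        | (rw [hsum_eA hτr]; omega)
        | (rw [hsum_eB hτr]; omega)
        | (rw [hsum_eC hτr]; omega)
  have hdisj : ∀ x ∈ Finset.range r, ∀ y ∈ Finset.range r, x ≠ y → Disjoint (g x) (g y) := by
    intro x hx y hy hxy
    rw [Finset.mem_range] at hx hy
    rw [Finset.disjoint_left]
    intro e hex hey
    have h1 := hsum_bound x hx e hex
    have h2 := hsum_bound y hy e hey
    omega
  have hbig : 3 * r ≤ k := by
    calc 3 * r = ∑ _τ ∈ Finset.range r, 3 := by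
          rw [Finset.sum_const, Finset.card_range, smul_eq_mul]; omega
      _ ≤ ∑ τ ∈ Finset.range r, (g τ).card := Finset.sum_le_sum hg3
      _ = ((Finset.range r).biUnion g).card := (Finset.card_biUnion hdisj).symm
      _ ≤ F.card := Finset.card_le_card (by
          intro e he
          rw [Finset.mem_biUnion] at he
          obtain ⟨τ, -, heg⟩ := he
          rw [hgdef] at heg
          exact (Finset.mem_inter.mp heg).1)
      _ ≤ k := hFk
  omega


/-! ### Transport to `Fin n` -/

section Transport

variable (r N)

noncomputable def EQ : W r N ≃ Fin (Fintype.card (W r N)) := Fintype.equivFin _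

noncomputable def G' : SimpleGraph (Fin (Fintype.card (W r N))) :=
  SimpleGraph.comap (⇑(EQ r N).symm) (G r N)

lemma adj_G' {a b : Fin (Fintype.card (W r N))} :
    (G' r N).Adj a b ↔ (G r N).Adj ((EQ r N).symm a) ((EQ r N).symm b) := Iff.rfl

noncomputable def ψ : G r N →g G' r N where
  toFun := ⇑(EQ r N)
  map_rel' := by
    intro a b h
    rw [adj_G', Equiv.symm_apply_apply, Equiv.symm_apply_apply]
    exact h

noncomputable def φ : G' r N →g G r N where
  toFun := ⇑(EQ r N).symm
  map_rel' := fun h => h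

lemma psi_apply (x : W r N) : ψ r N x = EQ r N x := rfl

lemma phi_apply (a : Fin (Fintype.card (W r N))) : φ r N a = (EQ r N).symm a := rfl

variable {r N}

lemma reachable_G' (hN : 0 < N) (a b : Fin (Fintype.card (W r N))) :
    (G' r N).Reachable a b := by
  obtain ⟨i, x, hx, hxe⟩ := exists_rep hN ((EQ r N).symm a)
  obtain ⟨i', y, hy, hye⟩ := exists_rep hN ((EQ r N).symm b)
  obtain ⟨w, -, -⟩ := exists_good_walk (r := r) i i' hx hy
  exact ⟨((w.copy hxe.symm hye.symm).map (ψ r N)).copy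
    (by rw [psi_apply, Equiv.apply_symm_apply]) (by rw [psi_apply, Equiv.apply_symm_apply])⟩

lemma connected_G' (hN : 0 < N) : (G' r N).Connected := by
  rw [SimpleGraph.connected_iff]
  exact ⟨fun a b => reachable_G' hN a b, ⟨(EQ r N) none⟩⟩

lemma dist_G' (hN : 0 < N) (x y : W r N) :
    (G' r N).dist ((EQ r N) x) ((EQ r N) y) = (G r N).dist x y := by
  have hc := connected_G (r := r) (N := N) hN
  have hc' := connected_G' (r := r) (N := N) hN
  apply le_antisymm
  · obtain ⟨p, hp⟩ := hc.exists_walk_length_eq_dist x y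
    calc (G' r N).dist ((EQ r N) x) ((EQ r N) y) ≤ (p.map (ψ r N)).length :=
          SimpleGraph.dist_le _
      _ = (G r N).dist x y := by rw [SimpleGraph.Walk.length_map, hp]
  · obtain ⟨q, hq⟩ := hc'.exists_walk_length_eq_dist ((EQ r N) x) ((EQ r N) y)
    have h1 : (φ r N) ((EQ r N) x) = x := by rw [phi_apply, Equiv.symm_apply_apply]
    have h2 : (φ r N) ((EQ r N) y) = y := by rw [phi_apply, Equiv.symm_apply_apply]
    calc (G r N).dist x y ≤ ((q.map (φ r N)).copy h1 h2).length := SimpleGraph.dist_le _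
      _ = (G' r N).dist ((EQ r N) x) ((EQ r N) y) := by
          rw [SimpleGraph.Walk.length_copy, SimpleGraph.Walk.length_map, hq]

lemma eccent_G' (hN : 0 < N) (x : W r N) :
    (G' r N).finEccent ((EQ r N) x) = (G r N).finEccent x := by
  rw [SimpleGraph.finEccent, SimpleGraph.finEccent]
  apply le_antisymm
  · apply Finset.sup_le
    intro b _
    have := dist_G' hN x ((EQ r N).symm b)
    rw [Equiv.apply_symm_apply] at this
    rw [this]
    exact Finset.le_sup (Finset.mem_univ _)
  · apply Finset.sup_le
    intro y _
    rw [← dist_G' hN x y]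
    exact Finset.le_sup (Finset.mem_univ _)

lemma radius_G' (hN : 0 < N) : (G' r N).finRadius = (G r N).finRadius := by
  rw [SimpleGraph.finRadius, SimpleGraph.finRadius]
  congr 1
  ext v
  constructor
  · rintro ⟨a, rfl⟩
    refine ⟨(EQ r N).symm a, ?_⟩
    rw [← eccent_G' hN ((EQ r N).symm a), Equiv.apply_symm_apply]
  · rintro ⟨x, rfl⟩
    exact ⟨(EQ r N) x, eccent_G' hN x⟩

lemma triangle_G' {a b : Fin (Fintype.card (W r N))} (h : (G' r N).Adj a b) :
    ∃ z, (G' r N).Adj a z ∧ (G' r N).Adj b z := by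
  rw [adj_G'] at h
  obtain ⟨z, h1, h2⟩ := triangle_G h
  refine ⟨(EQ r N) z, ?_, ?_⟩ <;> rw [adj_G', Equiv.symm_apply_apply] <;> assumption

lemma rainbow_G' (hr : 0 < r) (hN : 0 < N) :
    (G' r N).IsRainbowColoring (fun s => colF r N hr (s.map ⇑(EQ r N).symm)) := by
  intro a b
  obtain ⟨p, hp, hnd⟩ := isRainbow_colF hr hN ((EQ r N).symm a) ((EQ r N).symm b)
  refine ⟨(p.map (ψ r N)).copy (by rw [psi_apply, Equiv.apply_symm_apply])
    (by rw [psi_apply, Equiv.apply_symm_apply]), ?_, ?_⟩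
  · rw [SimpleGraph.Walk.isPath_copy]
    exact p.map_isPath_of_injective (fun x y hxy => (EQ r N).injective hxy) hp
  · rw [SimpleGraph.Walk.edges_copy, SimpleGraph.Walk.edges_map, List.map_map]
    have heq : (fun s => colF r N hr (Sym2.map (⇑(EQ r N).symm) s)) ∘ (Sym2.map (ψ r N)) =
        colF r N hr := by
      funext s
      induction s with
      | _ u v =>
        have h1 : (EQ r N).symm (ψ r N u) = u := by rw [psi_apply, Equiv.symm_apply_apply]
        have h2 : (EQ r N).symm (ψ r N v) = v := by rw [psi_apply, Equiv.symm_apply_apply]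
        simp only [Function.comp_apply, Sym2.map_pair_eq, h1, h2]
    rw [heq]
    exact hnd

lemma rc_lower_G' (hr : 0 < r) (hN : (3 * r) ^ r < N) {k : ℕ}
    (c : Sym2 (Fin (Fintype.card (W r N))) → Fin k) (hc : (G' r N).IsRainbowColoring c) :
    3 * r - 1 ≤ k := by
  apply rc_lower hr hN (fun s => c (s.map ⇑(EQ r N)))
  intro x y
  obtain ⟨p, hp, hnd⟩ := hc ((EQ r N) x) ((EQ r N) y)
  refine ⟨(p.map (φ r N)).copy (by rw [phi_apply, Equiv.symm_apply_apply])
    (by rw [phi_apply, Equiv.symm_apply_apply]), ?_, ?_⟩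
  · rw [SimpleGraph.Walk.isPath_copy]
    exact p.map_isPath_of_injective (fun a b hab => (EQ r N).symm.injective hab) hp
  · rw [SimpleGraph.Walk.edges_copy, SimpleGraph.Walk.edges_map, List.map_map]
    have heq : (fun s => c (Sym2.map (⇑(EQ r N)) s)) ∘ (Sym2.map (φ r N)) = c := by
      funext s
      induction s with
      | _ u v =>
        have h1 : (EQ r N) (φ r N u) = u := by rw [phi_apply, Equiv.apply_symm_apply]
        have h2 : (EQ r N) (φ r N v) = v := by rw [phi_apply, Equiv.apply_symm_apply]
        simp only [Function.comp_apply, Sym2.map_pair_eq, h1, h2]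
    rw [heq]
    exact hnd

end Transport

end RCProof

/-- **Example 1.** For every positive integer `r` there is a bridgeless
graph in which every edge lies in a triangle, with radius `r`, whose rainbow
connection number satisfies `3r - 1 ≤ rc(G) ≤ 3r`. -/
theorem exists_bridgeless_triangle_graph_with_rc_near_three_radius (r : ℕ) (hr : 1 ≤ r) :
    ∃ (n : ℕ) (G : SimpleGraph (Fin n)),
      G.Bridgeless ∧
      (∀ u v : Fin n, G.Adj u v → ∃ w : Fin n, G.Adj u w ∧ G.Adj v w) ∧
      G.finRadius = r ∧
      3 * r - 1 ≤ G.rainbowConnectionNumber ∧ G.rainbowConnectionNumber ≤ 3 * r := by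
  classical
  set N := (3 * r) ^ r + 1 with hNdef
  have hrpos : 0 < r := hr
  have hNlt : (3 * r) ^ r < N := by omega
  have hN2 : 2 ≤ N := by
    have : 1 ≤ (3 * r) ^ r := Nat.one_le_pow r (3 * r) (by omega)
    omega
  have hN0 : 0 < N := by omega
  refine ⟨Fintype.card (RCProof.W r N), RCProof.G' r N, ?_, ?_, ?_, ?_, ?_⟩
  · exact RCProof.bridgeless_of_triangles _ (RCProof.connected_G' hN0)
      (fun u v h => RCProof.triangle_G' h)
  · exact fun u v h => RCProof.triangle_G' h
  · rw [RCProof.radius_G' hN0, RCProof.radius_eq hrpos hN2]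
  · apply le_csInf
    · exact ⟨3 * r, ⟨_, RCProof.rainbow_G' hrpos hN0⟩⟩
    · rintro k ⟨c, hc⟩
      exact RCProof.rc_lower_G' hrpos hNlt c hc
  · exact Nat.sInf_le ⟨_, RCProof.rainbow_G' hrpos hN0⟩
end

section
/- For every integer n ≥ 217, let G be the graph obtained from the complete graph K_n on vertices v₁, …, v_n by attaching to each vᵢ a hanging path vᵢ, v_{i,1}, v_{i,2}, v_{i,3} of length 3 and then identifying all the endpoints v_{i,3} into a single vertex v. Then G is a bridgeless graph with diameter diam(G) = 3 whose rainbow connection number satisfies rc(G) ≥ 7. -/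
/-- The base relation of the graph of Example 2: vertices are the `n` vertices
`vᵢ = .inl i` of a complete graph, the internal path vertices `vᵢ,₁ = .inr (.inl (i,0))`
and `vᵢ,₂ = .inr (.inl (i,1))`, and the single identified end vertex `v = .inr (.inr ())`.
Each `vᵢ` is joined to every other `v_j`, and `vᵢ — vᵢ,₁ — vᵢ,₂ — v` is a hanging path. -/
def exampleRel (n : ℕ) :
    (Fin n ⊕ ((Fin n × Fin 2) ⊕ Unit)) → (Fin n ⊕ ((Fin n × Fin 2) ⊕ Unit)) → Prop
  | Sum.inl i, Sum.inl j => i ≠ j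
  | Sum.inl i, Sum.inr (Sum.inl (j, k)) => i = j ∧ k = 0
  | Sum.inr (Sum.inl (i, k)), Sum.inr (Sum.inl (j, l)) => i = j ∧ k ≠ l
  | Sum.inr (Sum.inl (_, k)), Sum.inr (Sum.inr _) => k = 1
  | _, _ => False

/-- The graph of Example 2: a complete graph `K_n` with a hanging path of length `3`
attached to each vertex, all far endpoints of the paths being identified. -/
def exampleGraph (n : ℕ) : SimpleGraph (Fin n ⊕ ((Fin n × Fin 2) ⊕ Unit)) :=
  SimpleGraph.fromRel (exampleRel n)

namespace Ex
open SimpleGraph Walk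
variable {n : ℕ}
abbrev V (n : ℕ) := Fin n ⊕ ((Fin n × Fin 2) ⊕ Unit)
def A (i : Fin n) : V n := Sum.inl i
def B (i : Fin n) : V n := Sum.inr (Sum.inl (i, 0))
def C (i : Fin n) : V n := Sum.inr (Sum.inl (i, 1))
def D : V n := Sum.inr (Sum.inr ())

lemma adjAA {i j : Fin n} (h : i ≠ j) : (exampleGraph n).Adj (A i) (A j) := by
  simp [exampleGraph, exampleRel, A, h]
lemma adjAB (i : Fin n) : (exampleGraph n).Adj (A i) (B i) := by
  simp [exampleGraph, exampleRel, A, B]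
lemma adjBC (i : Fin n) : (exampleGraph n).Adj (B i) (C i) := by
  simp [exampleGraph, exampleRel, B, C]
lemma adjCD (i : Fin n) : (exampleGraph n).Adj (C i) (D) := by
  simp [exampleGraph, exampleRel, C, D]


lemma nbrD {w : V n} (h : (exampleGraph n).Adj D w) : ∃ k, w = C k := by
  rcases w with j | ⟨⟨j, k⟩⟩ | u
  · simp [exampleGraph, exampleRel, D] at h
  · fin_cases k <;> simp_all [exampleGraph, exampleRel, D, C]
  · simp [exampleGraph, exampleRel, D] at h
lemma nbrC {i : Fin n} {w : V n} (h : (exampleGraph n).Adj (C i) w) : w = B i ∨ w = D := by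
  rcases w with j | ⟨⟨j, k⟩⟩ | u
  · simp [exampleGraph, exampleRel, C] at h
  · fin_cases k <;> simp_all [exampleGraph, exampleRel, C, B] <;> omega
  · simp [D]
lemma nbrB {i : Fin n} {w : V n} (h : (exampleGraph n).Adj (B i) w) : w = A i ∨ w = C i := by
  rcases w with j | ⟨⟨j, k⟩⟩ | u
  · simp_all [exampleGraph, exampleRel, B, A] <;> omega
  · fin_cases k <;> simp_all [exampleGraph, exampleRel, C, B] <;> omega
  · simp_all [exampleGraph, exampleRel, B]

/-- the canonical walk from `A i` down to `D` -/
def wAD (i : Fin n) : (exampleGraph n).Walk (A i) D :=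
  .cons (adjAB i) (.cons (adjBC i) (.cons (adjCD i) .nil))
def wBD (i : Fin n) : (exampleGraph n).Walk (B i) D :=
  .cons (adjBC i) (.cons (adjCD i) .nil)

lemma reach_D (x : V n) : (exampleGraph n).Reachable x D := by
  rcases x with i | ⟨⟨i, k⟩⟩ | u
  · exact ⟨wAD i⟩
  · fin_cases k
    · exact ⟨wBD i⟩
    · exact ⟨.cons (adjCD i) .nil⟩
  · rfl

lemma connected (hn : 1 ≤ n) : (exampleGraph n).Connected := by
  have : Nonempty (V n) := ⟨D⟩
  exact ⟨fun x y => (reach_D x).trans (reach_D y).symm⟩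

lemma edist_le_three (u v : V n) : (exampleGraph n).edist u v ≤ 3 := by
  have H : ∀ (w : (exampleGraph n).Walk u v), w.length ≤ 3 →
      (exampleGraph n).edist u v ≤ 3 := fun w hw =>
    le_trans (SimpleGraph.edist_le w) (by exact_mod_cast hw)
  rcases u with i | ⟨⟨i, k⟩⟩ | u <;> rcases v with j | ⟨⟨j, l⟩⟩ | v
  · by_cases hij : i = j
    · subst hij; simp
    · exact H (.cons (adjAA hij) .nil) (Nat.le_of_ble_eq_true rfl)
  · by_cases hij : i = j
    · subst hij; fin_cases l
      · exact H (.cons (adjAB i) .nil) (Nat.le_of_ble_eq_true rfl)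
      · exact H (.cons (adjAB i) (.cons (adjBC i) .nil)) (Nat.le_of_ble_eq_true rfl)
    · fin_cases l
      · exact H (.cons (adjAA hij) (.cons (adjAB j) .nil)) (Nat.le_of_ble_eq_true rfl)
      · exact H (.cons (adjAA hij) (.cons (adjAB j) (.cons (adjBC j) .nil))) (Nat.le_of_ble_eq_true rfl)
  · exact H (wAD i) (Nat.le_of_ble_eq_true rfl)
  · by_cases hij : i = j
    · subst hij; fin_cases k
      · exact H ((.cons (adjAB i) .nil : (exampleGraph n).Walk _ _).reverse) (Nat.le_of_ble_eq_true rfl)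
      · exact H ((.cons (adjAB i) (.cons (adjBC i) .nil) : (exampleGraph n).Walk _ _).reverse) (Nat.le_of_ble_eq_true rfl)
    · fin_cases k
      · exact H ((.cons (adjAA (Ne.symm hij)) (.cons (adjAB i) .nil) : (exampleGraph n).Walk _ _).reverse) (Nat.le_of_ble_eq_true rfl)
      · exact H ((.cons (adjAA (Ne.symm hij)) (.cons (adjAB i) (.cons (adjBC i) .nil)) : (exampleGraph n).Walk _ _).reverse) (Nat.le_of_ble_eq_true rfl)
  · by_cases hij : i = j
    · subst hij
      fin_cases k <;> fin_cases l
      · simp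
      · exact H (.cons (adjBC i) .nil) (Nat.le_of_ble_eq_true rfl)
      · exact H ((.cons (adjBC i) .nil : (exampleGraph n).Walk _ _).reverse) (Nat.le_of_ble_eq_true rfl)
      · simp
    · fin_cases k <;> fin_cases l
      · exact H (.cons ((adjAB i).symm) (.cons (adjAA hij) (.cons (adjAB j) .nil))) (Nat.le_of_ble_eq_true rfl)
      · exact H (.cons (adjBC i) (.cons (adjCD i) (.cons ((adjCD j).symm) .nil))) (Nat.le_of_ble_eq_true rfl)
      · exact H (.cons (adjCD i) (.cons ((adjCD j).symm) (.cons ((adjBC j).symm) .nil))) (Nat.le_of_ble_eq_true rfl)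
      · exact H (.cons (adjCD i) (.cons ((adjCD j).symm) .nil)) (Nat.le_of_ble_eq_true rfl)
  · fin_cases k
    · exact H (wBD i) (Nat.le_of_ble_eq_true rfl)
    · exact H (.cons (adjCD i) .nil) (Nat.le_of_ble_eq_true rfl)
  · exact H ((wAD j).reverse) (Nat.le_of_ble_eq_true rfl)
  · fin_cases l
    · exact H ((wBD j).reverse) (Nat.le_of_ble_eq_true rfl)
    · exact H ((.cons (adjCD j) .nil : (exampleGraph n).Walk _ _).reverse) (Nat.le_of_ble_eq_true rfl)
  · simp
end Ex
namespace Ex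
open SimpleGraph Walk
variable {n : ℕ}

def phi : V n → ℕ
  | Sum.inl _ => 0
  | Sum.inr (Sum.inl (_, k)) => 1 + k.val
  | Sum.inr (Sum.inr _) => 3

lemma phi_adj {x y : V n} (h : (exampleGraph n).Adj x y) : phi y ≤ phi x + 1 := by
  rcases x with i | ⟨⟨i, k⟩⟩ | u <;> rcases y with j | ⟨⟨j, l⟩⟩ | v <;>
    simp_all [exampleGraph, exampleRel, phi]
  have := k.isLt; have := l.isLt; omega

lemma phi_walk {x y : V n} (p : (exampleGraph n).Walk x y) : phi y ≤ phi x + p.length := by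
  induction p with
  | nil => simp
  | cons h q ih =>
    simp only [Walk.length_cons]
    have := phi_adj h
    omega

lemma three_le_edist (i : Fin n) : 3 ≤ (exampleGraph n).edist (A i) D := by
  obtain ⟨p, hp⟩ := (reach_D (A i)).exists_walk_length_eq_edist
  have := phi_walk p
  simp [phi, A, D] at this
  rw [← hp]
  exact_mod_cast this

lemma ediam_eq (hn : 1 ≤ n) : (exampleGraph n).ediam = 3 := by
  refine le_antisymm (SimpleGraph.ediam_le_of_edist_le edist_le_three) ?_
  exact le_trans (three_le_edist ⟨0, hn⟩) SimpleGraph.edist_le_ediam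

lemma diam_eq (hn : 1 ≤ n) : (exampleGraph n).diam = 3 := by
  rw [SimpleGraph.diam, ediam_eq hn]; rfl
end Ex
namespace Ex
open SimpleGraph Walk
variable {n : ℕ}
def cyc (i j : Fin n) (h : i ≠ j) : (exampleGraph n).Walk (A i) (A i) :=
  .cons (adjAB i) (.cons (adjBC i) (.cons (adjCD i) (.cons ((adjCD j).symm)
    (.cons ((adjBC j).symm) (.cons ((adjAB j).symm) (.cons (adjAA (Ne.symm h)) .nil))))))

lemma cyc_isCycle (i j : Fin n) (h : i ≠ j) : (cyc i j h).IsCycle := by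
  simp only [Walk.isCycle_def, Walk.isTrail_def, cyc, Walk.edges_cons, Walk.support_cons, Walk.edges_nil,
    Walk.support_nil, List.tail_cons, Walk.not_nil_cons, not_false_eq_true]
  refine ⟨?_, (by intro h; cases h), ?_⟩ <;> simp [A, B, C, D, List.nodup_cons, Sym2.eq_iff, h, h.symm]

lemma cyc_edges (i j : Fin n) (h : i ≠ j) : (cyc i j h).edges =
    [s(A i, B i), s(B i, C i), s(C i, D), s(D, C j), s(C j, B j), s(B j, A j), s(A j, A i)] := by
  simp [cyc]
end Ex
namespace Ex
open SimpleGraph Walk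
variable {n : ℕ}

lemma adj_cases {x y : V n} (h : (exampleGraph n).Adj x y) :
    (∃ i j, i ≠ j ∧ x = A i ∧ y = A j) ∨
    (∃ i, (x = A i ∧ y = B i) ∨ (x = B i ∧ y = A i)) ∨
    (∃ i, (x = B i ∧ y = C i) ∨ (x = C i ∧ y = B i)) ∨
    (∃ i, (x = C i ∧ y = D) ∨ (x = D ∧ y = C i)) := by
  rcases x with i | ⟨⟨i, k⟩⟩ | u <;> rcases y with j | ⟨⟨j, l⟩⟩ | v <;>
    [skip; skip; skip; skip; (fin_cases k <;> fin_cases l); skip; skip; skip; skip] <;>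
    simp_all [exampleGraph, exampleRel, A, B, C, D] <;>
    first
      | (exact Or.inl ⟨i, j, h, rfl, rfl⟩)
      | omega
      | simp_all

lemma not_isBridge (hn : 2 ≤ n) {e : Sym2 (V n)} (he : e ∈ (exampleGraph n).edgeSet) :
    ¬ (exampleGraph n).IsBridge e := by
  have hnt : Nontrivial (Fin n) := Fin.nontrivial_iff_two_le.mpr hn
  rw [SimpleGraph.isBridge_iff_mem_and_forall_cycle_notMem he]
  push_neg
  induction e with
  | _ x y =>
    rw [SimpleGraph.mem_edgeSet] at he
    rcases adj_cases he with ⟨i, j, hij, rfl, rfl⟩ | ⟨i, h1⟩ | ⟨i, h1⟩ | ⟨i, h1⟩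
    · exact ⟨_, cyc i j hij, cyc_isCycle i j hij, by
        rw [cyc_edges]; simp [Sym2.eq_iff]⟩
    all_goals {
      obtain ⟨j, hj⟩ := exists_ne i
      refine ⟨_, cyc i j (Ne.symm hj), cyc_isCycle i j (Ne.symm hj), ?_⟩
      rw [cyc_edges]
      rcases h1 with ⟨rfl, rfl⟩ | ⟨rfl, rfl⟩ <;> simp [Sym2.eq_iff] }
end Ex
namespace Ex
open SimpleGraph Walk
variable {n : ℕ}

/-- Any path from `C j` to `A k` (`j ≠ k`) avoiding `D` has length at least 3. -/
lemma L1' {j k : Fin n} (hjk : j ≠ k) (p : (exampleGraph n).Walk (C j) (A k))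
    (hp : p.IsPath) (hD : D ∉ p.support) : 3 ≤ p.length := by
  obtain ⟨w, h1, q, rfl⟩ := Walk.exists_eq_cons_of_ne (by simp [C, A]) p
  rcases nbrC h1 with rfl | rfl
  · -- w = B j
    obtain ⟨w2, h2, r, rfl⟩ := Walk.exists_eq_cons_of_ne (by simp [B, A]) q
    rcases nbrB h2 with rfl | rfl
    · -- w2 = A j, r : Walk (A j) (A k)
      have hr : r.length ≠ 0 := by
        intro h0
        have := Walk.eq_of_length_eq_zero h0
        simp [A] at this
        exact hjk this
      simp only [Walk.length_cons]
      omega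
    · -- w2 = C j : impossible, C j already used
      rw [Walk.cons_isPath_iff, Walk.cons_isPath_iff] at hp
      exact absurd (Walk.start_mem_support r) (by
        intro hmem
        exact hp.2 (by simp [Walk.support_cons, hmem]))
  · -- w = D : excluded
    exact absurd (by simp [Walk.support_cons]) hD

/-- Any path from `D` to `C j` is either the single edge or has length at least 6. -/
lemma M'' {j : Fin n} (q : (exampleGraph n).Walk D (C j)) (hq : q.IsPath) :
    q.edges = [s(D, C j)] ∨ 6 ≤ q.length := by
  obtain ⟨w2, h2, r, rfl⟩ := Walk.exists_eq_cons_of_ne (by simp [D, C]) q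
  obtain ⟨k, rfl⟩ := nbrD h2
  by_cases hkj : k = j
  · subst hkj
    have : r = Walk.nil := (Walk.isPath_iff_eq_nil (p := r)).mp (Walk.cons_isPath_iff h2 r |>.mp hq).1
    subst this
    left; simp
  · right
    -- r : Walk (C k) (C j), k ≠ j
    have hrp : r.IsPath ∧ D ∉ r.support := Walk.cons_isPath_iff h2 r |>.mp hq
    obtain ⟨w3, h3, r2, rfl⟩ := Walk.exists_eq_cons_of_ne (by simp [C, hkj]) r
    rcases nbrC h3 with rfl | rfl
    · -- w3 = B k
      obtain ⟨w4, h4, r3, rfl⟩ := Walk.exists_eq_cons_of_ne (by simp [B, C]) r2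
      rcases nbrB h4 with rfl | rfl
      · -- w4 = A k, r3 : Walk (A k) (C j)
        have hp3 : r3.IsPath := by
          have := hrp.1
          rw [Walk.cons_isPath_iff, Walk.cons_isPath_iff] at this
          exact this.1.1
        have hD3 : D ∉ r3.support := by
          intro hmem
          exact hrp.2 (by simp [Walk.support_cons, hmem])
        have := L1' (Ne.symm hkj) r3.reverse (hp3.reverse) (by
          rw [Walk.support_reverse]; simpa using hD3)
        rw [Walk.length_reverse] at this
        simp only [Walk.length_cons]
        omega
      · -- w4 = C k impossible
        have := hrp.1
        rw [Walk.cons_isPath_iff, Walk.cons_isPath_iff] at this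
        exact absurd (Walk.start_mem_support r3) (by
          intro hmem
          exact this.2 (by simp [Walk.support_cons, hmem]))
    · -- w3 = D impossible
      exact absurd (by simp [Walk.support_cons]) hrp.2
end Ex
namespace Ex
open SimpleGraph Walk
variable {n : ℕ}

lemma not_nodup_of_pair {c : Sym2 (V n) → Fin 6} {e f : Sym2 (V n)} {l : List (Sym2 (V n))}
    (he : e ∈ l) (hf : f ∈ l) (hne : e ≠ f) (hcf : c e = c f) : ¬ (l.map c).Nodup :=
  fun h => hne (List.inj_on_of_nodup_map h he hf hcf)

lemma not_nodup_of_long {c : Sym2 (V n) → Fin 6} {l : List (Sym2 (V n))}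
    (hl : 7 ≤ l.length) : ¬ (l.map c).Nodup := by
  intro h
  have := h.length_le_card
  simp at this
  omega

lemma no_rainbow_path {c : Sym2 (V n) → Fin 6} {i j : Fin n} (hij : i ≠ j)
    (hb : c s(B i, C i) = c s(B j, C j)) (hc : c s(C i, D) = c s(C j, D))
    (p : (exampleGraph n).Walk (C i) (C j)) (hp : p.IsPath) :
    ¬ (p.edges.map c).Nodup := by
  have hCC : (C i : V n) ≠ C j := by simp [C, hij]
  obtain ⟨w, h1, q, rfl⟩ := Walk.exists_eq_cons_of_ne hCC p
  have hq : q.IsPath := (Walk.cons_isPath_iff h1 q |>.mp hp).1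
  rcases nbrC h1 with rfl | rfl
  · -- first step C i → B i; analyze from the other end via reverse
    set p := Walk.cons h1 q with hpdef
    have hp' : p.reverse.IsPath := hp.reverse
    obtain ⟨w', h1', q', hq'⟩ := Walk.exists_eq_cons_of_ne (Ne.symm hCC) p.reverse
    have hq'path : q'.IsPath := by
      rw [hq'] at hp'
      exact (Walk.cons_isPath_iff h1' q' |>.mp hp').1
    have hmem' : ∀ e ∈ q'.edges, e ∈ p.edges := by
      intro e hee
      have : e ∈ p.reverse.edges := by rw [hq']; simp [hee]
      rwa [Walk.edges_reverse, List.mem_reverse] at this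
    rcases nbrC h1' with rfl | rfl
    · -- last step through B j : two b-edges
      refine not_nodup_of_pair (e := s(C i, B i)) (f := s(C j, B j)) ?_ ?_ ?_ ?_
      · simp [hpdef]
      · have : s(C j, B j) ∈ p.reverse.edges := by rw [hq']; simp
        rwa [Walk.edges_reverse, List.mem_reverse] at this
      · simp [Sym2.eq_iff, B, C, hij]
      · rw [Sym2.eq_swap (a := C i), Sym2.eq_swap (a := C j)] at *; exact hb
    · -- last step through D
      rcases M'' (j := i) q' hq'path with hshort | hlong
      · refine not_nodup_of_pair (e := s(C j, D)) (f := s(D, C i)) ?_ ?_ ?_ ?_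
        · have : s(C j, D) ∈ p.reverse.edges := by rw [hq']; simp
          rwa [Walk.edges_reverse, List.mem_reverse] at this
        · exact hmem' _ (by simp [hshort])
        · simp [Sym2.eq_iff, C, D]; exact fun h => absurd h.symm hij
        · rw [Sym2.eq_swap (a := D)]; exact hc.symm
      · refine not_nodup_of_long ?_
        have hlen : p.edges.length = p.length := Walk.length_edges p
        have : p.reverse.length = q'.length + 1 := by rw [hq']; simp
        rw [Walk.length_reverse] at this
        omega
  · -- first step C i → D
    rcases M'' q hq with hshort | hlong
    · refine not_nodup_of_pair (e := s(C i, D)) (f := s(D, C j)) ?_ ?_ ?_ ?_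
      · simp
      · simp [hshort]
      · simp [Sym2.eq_iff, C, D, hij]
      · rw [Sym2.eq_swap (a := D)]; exact hc
    · exact not_nodup_of_long (by simp [Walk.edges_cons]; omega)
end Ex
namespace Ex
open SimpleGraph Walk
variable {n : ℕ}

lemma no_rainbow_six (hn : 217 ≤ n) (c : Sym2 (V n) → Fin 6) :
    ¬ SimpleGraph.IsRainbowColoring (exampleGraph n) c := by
  intro hrc
  have hcard : Fintype.card (Fin 6 × Fin 6 × Fin 6) < Fintype.card (Fin n) := by
    simp only [Fintype.card_prod, Fintype.card_fin]
    exact lt_of_lt_of_le (by norm_num) hn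
  obtain ⟨i, j, hij, hterm⟩ := Fintype.exists_ne_map_eq_of_card_lt
    (fun i : Fin n => (c s(A i, B i), c s(B i, C i), c s(C i, D))) hcard
  simp only [Prod.mk.injEq] at hterm
  obtain ⟨p, hp, hnd⟩ := hrc (C i) (C j)
  exact no_rainbow_path hij hterm.2.1 hterm.2.2 p hp hnd

lemma rainbow_exists (hn : 1 ≤ n) :
    ∃ k : ℕ, ∃ c : Sym2 (V n) → Fin k, SimpleGraph.IsRainbowColoring (exampleGraph n) c := by
  refine ⟨Fintype.card (Sym2 (V n)), Fintype.equivFin (Sym2 (V n)), fun u v => ?_⟩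
  obtain ⟨w⟩ := (connected hn) u v
  exact ⟨w.bypass, w.bypass_isPath, (w.bypass_isPath.edges_nodup).map
    (Fintype.equivFin (Sym2 (V n))).injective⟩

lemma seven_le (hn : 217 ≤ n) :
    7 ≤ sInf {k : ℕ | ∃ c : Sym2 (V n) → Fin k,
      SimpleGraph.IsRainbowColoring (exampleGraph n) c} := by
  obtain ⟨k0, c0, hc0⟩ := rainbow_exists (le_trans (by norm_num : (1:ℕ) ≤ 217) hn)
  refine le_csInf ⟨k0, c0, hc0⟩ ?_
  rintro k ⟨c, hc⟩
  by_contra hlt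
  push_neg at hlt
  have hk6 : k ≤ 6 := by omega
  apply no_rainbow_six hn (fun e => Fin.castLE hk6 (c e))
  intro u v
  obtain ⟨p, hp, hnd⟩ := hc u v
  refine ⟨p, hp, ?_⟩
  have : (p.edges.map fun e => Fin.castLE hk6 (c e)) = (p.edges.map c).map (Fin.castLE hk6) := by
    simp [List.map_map]
  rw [this]
  exact hnd.map (Fin.castLE_injective hk6)
end Ex


/-- **Example 2.** For `n ≥ 217`, the graph obtained from `K_n` by
hanging a path of length `3` at each vertex and identifying all the far endpoints is a
bridgeless graph of diameter `3` with rainbow connection number at least `7`. -/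
theorem exampleGraph_bridgeless_diam_three_rc_ge_seven (n : ℕ) (hn : 217 ≤ n) :
    (exampleGraph n).Bridgeless ∧ (exampleGraph n).diam = 3 ∧
      7 ≤ (exampleGraph n).rainbowConnectionNumber := by
  refine ⟨⟨Ex.connected (le_trans (by norm_num) hn), fun e he => Ex.not_isBridge (le_trans (by norm_num) hn) he⟩,
    Ex.diam_eq (le_trans (by norm_num) hn), Ex.seven_le hn⟩
end

section
/- Let G be a bridgeless finite simple graph with diameter 3, let uv be an edge of G contained in no triangle, and set A = N(u)∖{v}, B = N(v)∖{u}, X = {x ∉ A∪B∪{u,v} : x has a neighbor in A but no neighbor in B}, Z = {x ∉ A∪B∪{u,v} : x has a neighbor in A and a neighbor in B}, A₁ = {x ∈ A : x has a neighbor in B∪X∪Z}, A₂ = {x ∈ A∖A₁ : x is not isolated in G[A∖A₁]}, and A₃ = A∖(A₁∪A₂). Then every vertex of A₃ has a neighbor in A₁. -/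
/-- **Observation 1 (1).** In a bridgeless graph of diameter `3` with an
edge `uv` lying in no triangle, with `A = N(u) \ {v}`, `B = N(v) \ {u}`,
`X` the outside vertices with a neighbor in `A` but none in `B`,
`Z` the outside vertices with neighbors in both `A` and `B`,
`A₁` the vertices of `A` with a neighbor in `B ∪ X ∪ Z`,
`A₂` the non-isolated vertices of `G[A \ A₁]`, and `A₃ = A \ (A₁ ∪ A₂)`,
every vertex of `A₃` has a neighbor in `A₁`. -/
theorem A3_has_neighbor_in_A1 {V : Type*} [Fintype V] (G : SimpleGraph V)
    (hb : G.Bridgeless) (hd : G.diam = 3)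
    (u v : V) (huv : G.Adj u v)
    (htri : ¬ ∃ w : V, G.Adj u w ∧ G.Adj v w)
    (A B X Z A₁ A₂ A₃ : Set V)
    (hA : A = {x | G.Adj u x ∧ x ≠ v})
    (hB : B = {x | G.Adj v x ∧ x ≠ u})
    (hX : X = {x | x ∉ A ∪ B ∪ {u, v} ∧ (∃ a ∈ A, G.Adj x a) ∧ ¬ ∃ b ∈ B, G.Adj x b})
    (hZ : Z = {x | x ∉ A ∪ B ∪ {u, v} ∧ (∃ a ∈ A, G.Adj x a) ∧ ∃ b ∈ B, G.Adj x b})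
    (hA₁ : A₁ = {x ∈ A | ∃ y ∈ B ∪ X ∪ Z, G.Adj x y})
    (hA₂ : A₂ = {x ∈ A \ A₁ | ∃ y ∈ A \ A₁, G.Adj x y})
    (hA₃ : A₃ = A \ (A₁ ∪ A₂)) :
    ∀ x ∈ A₃, ∃ y ∈ A₁, G.Adj x y := by
  intro x hx
  rw [hA₃] at hx
  obtain ⟨hxA, hxn⟩ := hx
  have hxA1 : x ∉ A₁ := fun h => hxn (Or.inl h)
  have hxA2 : x ∉ A₂ := fun h => hxn (Or.inr h)
  have hadjux : G.Adj u x := (hA ▸ hxA).1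
  have hne : x ≠ u := hadjux.ne'
  have hmem : s(x, u) ∈ G.edgeSet := by simpa using hadjux.symm
  have hbr := hb.2 _ hmem
  rw [SimpleGraph.isBridge_iff] at hbr
  push_neg at hbr
  obtain ⟨p⟩ := hbr
  cases p with
  | nil => exact absurd rfl hne
  | @cons _ y _ h q =>
    rw [SimpleGraph.deleteEdges_adj] at h
    obtain ⟨hGxy, hnot⟩ := h
    have hyu : y ≠ u := by
      intro he; subst he; exact hnot rfl
    have hyv : y ≠ v := by
      intro he; subst he
      exact htri ⟨x, hadjux, hGxy.symm⟩
    by_cases hyA : y ∈ A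
    · by_cases hyA1 : y ∈ A₁
      · exact ⟨y, hyA1, hGxy⟩
      · exact absurd (hA₂ ▸ ⟨⟨hxA, hxA1⟩, y, ⟨hyA, hyA1⟩, hGxy⟩) hxA2
    · by_cases hyB : y ∈ B
      · exact absurd (hA₁ ▸ ⟨hxA, y, Or.inl (Or.inl hyB), hGxy⟩) hxA1
      · have hyout : y ∉ A ∪ B ∪ {u, v} := by
          rintro ((h1 | h1) | (h1 | h1))
          · exact hyA h1
          · exact hyB h1
          · exact hyu h1
          · exact hyv h1
        have hyAnb : ∃ a ∈ A, G.Adj y a := ⟨x, hxA, hGxy.symm⟩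
        by_cases hyBnb : ∃ b ∈ B, G.Adj y b
        · exact absurd (hA₁ ▸ ⟨hxA, y, Or.inr (hZ ▸ ⟨hyout, hyAnb, hyBnb⟩), hGxy⟩) hxA1
        · exact absurd (hA₁ ▸ ⟨hxA, y, Or.inl (Or.inr (hX ▸ ⟨hyout, hyAnb, hyBnb⟩)), hGxy⟩) hxA1
end
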